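/- arXiv:cs/0603014 — 13 statements merged into one kernel-verified Lean document; each statement's English description precedes it below -/
import Mathlib

section
/- If ρ is a near order function on an F-algebra R and the set M_ρ = {f ∈ R : ρ(f) > ρ(1)} is nonempty, then M_ρ is infinite and ρ(M_ρ) is an infinite set of natural numbers. -/
/-- A near order (n-order) function on an `F`-algebra `R`: axioms (N0)–(N4). -/
def IsNearOrder (F : Type*) {R : Type*} [Field F] [CommRing R] [Algebra F R]
    (ρ : R → WithBot ℕ) : Prop :=
  (∀ f : R, ρ f = ⊥ ↔ f = 0) ∧
  (∀ (c : F) (f : R), c ≠ 0 → ρ (c • f) = ρ f) ∧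
  (∀ f g : R, ρ (f + g) ≤ max (ρ f) (ρ g)) ∧
  (∀ f g h : R, ρ f < ρ g → ρ (f * h) ≤ ρ (g * h)) ∧
  (∀ f g h : R, ρ f < ρ g → ρ 1 < ρ h → ρ (f * h) < ρ (g * h)) ∧
  (∀ f g : R, ρ f = ρ g → ρ 1 < ρ f → ρ 1 < ρ g →
    ∃ c : F, c ≠ 0 ∧ ρ (f - c • g) < ρ f)

/-- if `M_ρ` is nonempty then `M_ρ` is infinite and `ρ(M_ρ)` is infinite. -/
theorem stmt_0 {F R : Type*} [Field F] [CommRing R] [Algebra F R]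
    (ρ : R → WithBot ℕ) (hρ : IsNearOrder F ρ)
    (hM : {f : R | ρ 1 < ρ f}.Nonempty) :
    {f : R | ρ 1 < ρ f}.Infinite ∧ (ρ '' {f : R | ρ 1 < ρ f}).Infinite := by
  obtain ⟨f, hf⟩ := hM
  have key : ∀ n, ρ (f ^ (n + 1)) < ρ (f ^ (n + 2)) := by
    intro n
    induction n with
    | zero =>
      have := hρ.2.2.2.2.1 1 f f hf hf
      simpa [pow_succ, pow_one] using this
    | succ n ih =>
      have := hρ.2.2.2.2.1 (f ^ (n + 1)) (f ^ (n + 2)) f ih hf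
      simpa [pow_succ] using this
  have mono : StrictMono (fun n => ρ (f ^ (n + 1))) := strictMono_nat_of_lt_succ key
  have mem : ∀ n, ρ 1 < ρ (f ^ (n + 1)) := by
    intro n
    induction n with
    | zero => simpa using hf
    | succ n ih => exact ih.trans (key n)
  have himg : (ρ '' {f : R | ρ 1 < ρ f}).Infinite := by
    exact Set.infinite_of_injective_forall_mem (f := fun n : ℕ => ρ (f ^ (n + 1)))
      mono.injective (fun n => ⟨f ^ (n + 1), mem n, rfl⟩)
  exact ⟨Set.Infinite.of_image _ himg, himg⟩
end

section
/- Let R = F[X,Y]/(XY - 1), and for f ∈ R write f uniquely as f = f₁(x) + f₂(y) with f₁, f₂ ∈ F[T], f₂(0) = 0. Define ρ(0) = -∞, ρ(f) = 0 if f₁ ≠ 0 and f₂ = 0, and ρ(f) = deg(f₂) if f₂ ≠ 0. Then ρ is a near order function on R. -/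
open scoped Classical

/-- The function `ρ` on `R = F[X,Y]/(XY-1)` (realized as Laurent polynomials,
with `x = T` and `y = T⁻¹`): `ρ(0) = -∞`, `ρ(f) = 0` if `f` has no negative-degree
part (`f₂ = 0`), and `ρ(f) = deg f₂` (the negative of the least exponent occurring
in `f`) otherwise. -/
noncomputable def laurentRho (F : Type*) [Field F] (f : LaurentPolynomial F) : WithBot ℕ :=
  if h : f = 0 then ⊥
  else (((-(f.coeff.support.min' (Finsupp.support_nonempty_iff.mpr (mt AddMonoidAlgebra.coeff_eq_zero.mp h)))) ⊔ 0).toNat : ℕ)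

namespace LaurentRhoAux
open LaurentPolynomial Polynomial

variable {F : Type*} [Field F]

noncomputable def msupp (f : LaurentPolynomial F) : ℤ :=
  if h : f = 0 then 0 else f.coeff.support.min' (Finsupp.support_nonempty_iff.mpr (mt AddMonoidAlgebra.coeff_eq_zero.mp h))

lemma msupp_eq {f : LaurentPolynomial F} (h : f ≠ 0) :
    msupp f = f.coeff.support.min' (Finsupp.support_nonempty_iff.mpr (mt AddMonoidAlgebra.coeff_eq_zero.mp h)) := dif_neg h

lemma msupp_mem {f : LaurentPolynomial F} (h : f ≠ 0) : msupp f ∈ f.coeff.support := by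
  rw [msupp_eq h]; exact Finset.min'_mem _ _

lemma msupp_le {f : LaurentPolynomial F} (h : f ≠ 0) {n : ℤ} (hn : n ∈ f.coeff.support) :
    msupp f ≤ n := by rw [msupp_eq h]; exact Finset.min'_le _ _ hn

lemma rho_eq {f : LaurentPolynomial F} (h : f ≠ 0) :
    laurentRho F f = (((-msupp f).toNat : ℕ) : WithBot ℕ) := by
  rw [laurentRho, dif_neg h, msupp_eq h]
  congr 1
  omega

lemma rho_zero : laurentRho F 0 = ⊥ := dif_pos rfl

lemma support_mul_T (f : LaurentPolynomial F) (n : ℤ) :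
    (f * T n).coeff.support = f.coeff.support.map (addRightEmbedding n) := by
  have hT : (T n : LaurentPolynomial F) = AddMonoidAlgebra.single n 1 := rfl
  rw [hT]
  exact AddMonoidAlgebra.support_coeff_mul_single f 1 (by simp) n

lemma msupp_mul_T {f : LaurentPolynomial F} (h : f ≠ 0) (n : ℤ) :
    msupp (f * T n) = msupp f + n := by
  have hT : f * T n ≠ 0 := by
    intro hc
    apply h
    have hfe : f = f * T n * T (-n) := by
      rw [mul_assoc, ← T_add]; simp
    rw [hc, zero_mul] at hfe
    exact hfe
  apply le_antisymm
  · apply msupp_le hT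
    rw [support_mul_T]
    exact Finset.mem_map.mpr ⟨msupp f, msupp_mem h, rfl⟩
  · have := msupp_mem hT
    rw [support_mul_T] at this
    obtain ⟨a, ha, hae⟩ := Finset.mem_map.mp this
    have : a + n = msupp (f * T n) := hae
    have := msupp_le h ha
    omega

lemma msupp_toLaurent {p : Polynomial F} (h : p ≠ 0) :
    msupp (Polynomial.toLaurent p) = (p.natTrailingDegree : ℤ) := by
  have h' : Polynomial.toLaurent p ≠ 0 := Polynomial.toLaurent_ne_zero.mpr h
  rw [Polynomial.natTrailingDegree_eq_support_min' h]
  apply le_antisymm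
  · apply msupp_le h'
    rw [toLaurent_support]
    exact Finset.mem_map.mpr ⟨_, Finset.min'_mem _ _, rfl⟩
  · have := msupp_mem h'
    rw [toLaurent_support] at this
    obtain ⟨a, ha, hae⟩ := Finset.mem_map.mp this
    have h1 : (a : ℤ) = msupp (Polynomial.toLaurent p) := hae
    have h2 := Finset.min'_le _ _ ha
    omega

lemma msupp_mul {f g : LaurentPolynomial F} (hf : f ≠ 0) (hg : g ≠ 0) :
    msupp (f * g) = msupp f + msupp g := by
  obtain ⟨n, p, hp⟩ := f.exists_T_pow
  obtain ⟨m, q, hq⟩ := g.exists_T_pow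
  have hp0 : p ≠ 0 := by
    intro hc; rw [hc] at hp
    exact mul_ne_zero hf ((isUnit_T (R := F) n).ne_zero) (by simpa using hp.symm)
  have hq0 : q ≠ 0 := by
    intro hc; rw [hc] at hq
    exact mul_ne_zero hg ((isUnit_T (R := F) m).ne_zero) (by simpa using hq.symm)
  have key : Polynomial.toLaurent (p * q) = (f * g) * T ((n : ℤ) + m) := by
    rw [map_mul, hp, hq, T_add]; ring
  have e1 : msupp (Polynomial.toLaurent p) = msupp f + n := by rw [hp, msupp_mul_T hf]
  have e2 : msupp (Polynomial.toLaurent q) = msupp g + m := by rw [hq, msupp_mul_T hg]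
  have e3 : msupp (Polynomial.toLaurent (p * q)) = msupp (f * g) + ((n : ℤ) + m) := by
    rw [key, msupp_mul_T (mul_ne_zero hf hg)]
  rw [msupp_toLaurent hp0] at e1
  rw [msupp_toLaurent hq0] at e2
  rw [msupp_toLaurent (mul_ne_zero hp0 hq0)] at e3
  rw [Polynomial.natTrailingDegree_mul hp0 hq0] at e3
  push_cast at e3
  omega

lemma msupp_one : msupp (1 : LaurentPolynomial F) = 0 := by
  have h1 : (1 : LaurentPolynomial F) ≠ 0 := one_ne_zero
  apply le_antisymm
  · apply msupp_le h1
    rw [AddMonoidAlgebra.support_coeff_one]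
    exact Finset.mem_zero.mpr rfl
  · have := msupp_mem h1
    rw [AddMonoidAlgebra.support_coeff_one] at this
    simp only [Finset.mem_zero] at this
    omega

lemma rho_one : laurentRho F 1 = ((0 : ℕ) : WithBot ℕ) := by
  rw [rho_eq one_ne_zero, msupp_one]; rfl

lemma smul_ne_zero' {c : F} (hc : c ≠ 0) {f : LaurentPolynomial F} (hf : f ≠ 0) :
    c • f ≠ 0 := by
  intro h
  apply hf
  have := congrArg (c⁻¹ • ·) h
  simpa [smul_smul, inv_mul_cancel₀ hc] using this

lemma support_smul_eq' {c : F} (hc : c ≠ 0) (f : LaurentPolynomial F) :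
    (c • f).coeff.support = f.coeff.support :=
  Finsupp.support_smul_eq hc

lemma msupp_smul {c : F} (hc : c ≠ 0) (f : LaurentPolynomial F) :
    msupp (c • f) = msupp f := by
  by_cases hf : f = 0
  · rw [hf, smul_zero]
  · have hcf : c • f ≠ 0 := smul_ne_zero' hc hf
    apply le_antisymm
    · apply msupp_le hcf
      rw [support_smul_eq' hc]
      exact msupp_mem hf
    · apply msupp_le hf
      rw [← support_smul_eq' hc f]
      exact msupp_mem hcf

end LaurentRhoAux

open LaurentRhoAux in
/-- `laurentRho` is a near order function on `F[X,Y]/(XY-1)`. -/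
theorem stmt_2 (F : Type*) [Field F] :
    IsNearOrder F (laurentRho F) := by
  classical
  refine ⟨?_, ?_, ?_, ?_, ?_, ?_⟩
  -- N0
  · intro f
    constructor
    · intro hf
      by_contra h
      rw [rho_eq h] at hf
      exact WithBot.coe_ne_bot hf
    · intro h; rw [h, rho_zero]
  -- N1
  · intro c f hc
    by_cases hf : f = 0
    · rw [hf, smul_zero]
    · rw [rho_eq (smul_ne_zero' hc hf), rho_eq hf, msupp_smul hc]
  -- N2
  · intro f g
    by_cases hf : f = 0
    · simp [hf]
    by_cases hg : g = 0
    · simp [hg]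
    by_cases hfg : f + g = 0
    · rw [hfg, rho_zero]; exact bot_le
    rw [rho_eq hfg, rho_eq hf, rho_eq hg]
    have hmem := msupp_mem hfg
    have hsub := Finsupp.support_add hmem
    rcases Finset.mem_union.mp hsub with h | h
    · refine le_max_of_le_left ?_
      have h1 := msupp_le hf h
      exact_mod_cast (by omega : (-msupp (f + g)).toNat ≤ (-msupp f).toNat)
    · refine le_max_of_le_right ?_
      have h1 := msupp_le hg h
      exact_mod_cast (by omega : (-msupp (f + g)).toNat ≤ (-msupp g).toNat)
  -- N3
  · intro f g h hlt
    by_cases hg : g = 0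
    · rw [hg, rho_zero] at hlt; exact absurd hlt (by simp)
    by_cases hf : f = 0
    · rw [hf, zero_mul, rho_zero]; exact bot_le
    by_cases hh : h = 0
    · rw [hh, mul_zero, mul_zero]
    rw [rho_eq hf, rho_eq hg] at hlt
    rw [rho_eq (mul_ne_zero hf hh), rho_eq (mul_ne_zero hg hh), msupp_mul hf hh,
      msupp_mul hg hh]
    have hlt' : (-msupp f).toNat < (-msupp g).toNat := by exact_mod_cast hlt
    exact_mod_cast (by omega : (-(msupp f + msupp h)).toNat ≤ (-(msupp g + msupp h)).toNat)
  -- N3 strict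
  · intro f g h hlt h1
    by_cases hg : g = 0
    · rw [hg, rho_zero] at hlt; exact absurd hlt (by simp)
    have hh : h ≠ 0 := by
      intro hc; rw [hc, rho_zero] at h1; exact absurd h1 (by simp)
    rw [rho_one, rho_eq hh] at h1
    have hh' : 0 < (-msupp h).toNat := by exact_mod_cast h1
    by_cases hf : f = 0
    · rw [hf, zero_mul, rho_zero, rho_eq (mul_ne_zero hg hh)]
      exact WithBot.bot_lt_coe _
    rw [rho_eq hf, rho_eq hg] at hlt
    have hlt' : (-msupp f).toNat < (-msupp g).toNat := by exact_mod_cast hlt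
    rw [rho_eq (mul_ne_zero hf hh), rho_eq (mul_ne_zero hg hh), msupp_mul hf hh,
      msupp_mul hg hh]
    exact_mod_cast (by omega : (-(msupp f + msupp h)).toNat < (-(msupp g + msupp h)).toNat)
  -- N4
  · intro f g hfg h1f h1g
    have hf : f ≠ 0 := by
      intro hc; rw [hc, rho_zero] at h1f; exact absurd h1f (by simp)
    have hg : g ≠ 0 := by
      intro hc; rw [hc, rho_zero] at h1g; exact absurd h1g (by simp)
    rw [rho_one, rho_eq hf] at h1f
    rw [rho_one, rho_eq hg] at h1g
    rw [rho_eq hf, rho_eq hg] at hfg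
    have e : (-msupp f).toNat = (-msupp g).toNat := by exact_mod_cast hfg
    have p1 : (0 : ℕ) < (-msupp f).toNat := by exact_mod_cast h1f
    have p2 : (0 : ℕ) < (-msupp g).toNat := by exact_mod_cast h1g
    have hmeq : msupp f = msupp g := by omega
    have hmneg : msupp f < 0 := by omega
    have hfc : f.coeff (msupp f) ≠ 0 := Finsupp.mem_support_iff.mp (msupp_mem hf)
    have hgc : g.coeff (msupp g) ≠ 0 := Finsupp.mem_support_iff.mp (msupp_mem hg)
    refine ⟨f.coeff (msupp f) / g.coeff (msupp g), div_ne_zero hfc hgc, ?_⟩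
    set c : F := f.coeff (msupp f) / g.coeff (msupp g) with hcdef
    have hc : c ≠ 0 := div_ne_zero hfc hgc
    by_cases hz : f - c • g = 0
    · rw [hz, rho_zero, rho_eq hf]; exact WithBot.bot_lt_coe _
    · have hcoeff : (f - c • g).coeff (msupp f) = 0 := by
        rw [AddMonoidAlgebra.coeff_sub, Finsupp.sub_apply, AddMonoidAlgebra.coeff_smul, Finsupp.smul_apply, smul_eq_mul, hmeq, hcdef,
          div_mul_cancel₀ _ hgc, ← hmeq, sub_self]
      have hnotmem : msupp f ∉ (f - c • g).coeff.support := by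
        rw [Finsupp.mem_support_iff]; exact fun h => h hcoeff
      have hbig : msupp f < msupp (f - c • g) := by
        have hmem := msupp_mem hz
        have hsub : (f - c • g).coeff.support ⊆ f.coeff.support ∪ (c • g).coeff.support :=
          Finsupp.support_sub
        have hle : msupp f ≤ msupp (f - c • g) := by
          rcases Finset.mem_union.mp (hsub hmem) with h | h
          · exact msupp_le hf h
          · rw [support_smul_eq' hc] at h
            rw [hmeq]; exact msupp_le hg h
        rcases lt_or_eq_of_le hle with h | h
        · exact h
        · exact absurd (h ▸ hmem) hnotmem
      rw [rho_eq hz, rho_eq hf]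
      exact_mod_cast (by omega : (-msupp (f - c • g)).toNat < (-msupp f).toNat)
end

section
/- A function ρ : R → ℕ ∪ {-∞} on an F-algebra R is an order function if and only if ρ is a near order function and the set U_ρ = {f ∈ R : ρ(f) ≤ ρ(1)} equals F (the scalars together with 0). -/
/-- An order function on an `F`-algebra `R`: axioms (O0)–(O4). -/
def IsOrder (F : Type*) {R : Type*} [Field F] [CommRing R] [Algebra F R]
    (ρ : R → WithBot ℕ) : Prop :=
  (∀ f : R, ρ f = ⊥ ↔ f = 0) ∧
  (∀ (c : F) (f : R), c ≠ 0 → ρ (c • f) = ρ f) ∧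
  (∀ f g : R, ρ (f + g) ≤ max (ρ f) (ρ g)) ∧
  (∀ f g h : R, ρ f < ρ g → h ≠ 0 → ρ (f * h) < ρ (g * h)) ∧
  (∀ f g : R, ρ f = ρ g → ρ f ≠ ⊥ → ∃ c : F, c ≠ 0 ∧ ρ (f - c • g) < ρ g)

/-- In an order function, any element of order `< ρ 1` is zero. -/
lemma order_lt_one_eq_zero {F R : Type*} [Field F] [CommRing R] [Algebra F R]
    {ρ : R → WithBot ℕ} (hO : IsOrder F ρ) {g : R} (hg : ρ g < ρ 1) : g = 0 := by
  obtain ⟨h0, h1, h2, h3, h4⟩ := hO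
  by_contra hne
  haveI : Nontrivial R := nontrivial_of_ne g 0 hne
  -- products of nonzero elements are nonzero
  have hdom : ∀ a b : R, a ≠ 0 → b ≠ 0 → a * b ≠ 0 := by
    intro a b ha hb hab
    have : ρ 0 < ρ a := by
      rw [(h0 0).mpr rfl]
      exact Ne.bot_lt (fun h => ha ((h0 a).mp h))
    have := h3 0 a b this hb
    rw [zero_mul, hab, (h0 0).mpr rfl] at this
    exact lt_irrefl _ this
  have hpow : ∀ n : ℕ, g ^ n ≠ 0 := by
    intro n
    induction n with
    | zero => simp
    | succ n ih => rw [pow_succ]; exact hdom _ _ ih hne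
  have hdec : ∀ n : ℕ, ρ (g ^ (n + 1)) < ρ (g ^ n) := by
    intro n
    have := h3 g 1 (g ^ n) hg (hpow n)
    rwa [one_mul, ← pow_succ'] at this
  exact (RelEmbedding.natGT (fun n => ρ (g ^ n)) hdec).not_wellFounded
    wellFounded_lt

/-- `ρ` is an order function iff it is a near order function and
`U_ρ = {f : ρ(f) ≤ ρ(1)}` consists exactly of the scalars (the image of `F` in `R`). -/
theorem stmt_3 {F R : Type*} [Field F] [CommRing R] [Algebra F R]
    (ρ : R → WithBot ℕ) :
    IsOrder F ρ ↔
      (IsNearOrder F ρ ∧ {f : R | ρ f ≤ ρ 1} = Set.range (algebraMap F R)) := by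
  constructor
  · intro hO
    obtain ⟨h0, h1, h2, h3, h4⟩ := hO
    refine ⟨⟨h0, h1, h2, ?_, ?_, ?_⟩, ?_⟩
    · intro f g h hfg
      by_cases hh : h = 0
      · simp [hh]
      · exact le_of_lt (h3 f g h hfg hh)
    · intro f g h hfg hh
      have hh0 : h ≠ 0 := by
        intro h0'
        rw [h0', (h0 0).mpr rfl] at hh
        exact (not_le.mpr hh) bot_le
      exact h3 f g h hfg hh0
    · intro f g hfg h1f h1g
      have hf : ρ f ≠ ⊥ := fun h => by
        rw [h] at h1f; exact (not_le.mpr h1f) bot_le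
      obtain ⟨c, hc, hlt⟩ := h4 f g hfg hf
      exact ⟨c, hc, by rwa [← hfg] at hlt⟩
    · ext f
      simp only [Set.mem_setOf_eq, Set.mem_range]
      constructor
      · intro hf
        by_cases hf0 : f = 0
        · exact ⟨0, by simp [hf0]⟩
        rcases lt_or_eq_of_le hf with hlt | heq
        · exact ⟨0, by simp [order_lt_one_eq_zero ⟨h0, h1, h2, h3, h4⟩ hlt]⟩
        · have h1ne : ρ f ≠ ⊥ := fun h => hf0 ((h0 f).mp h)
          obtain ⟨c, hc, hlt⟩ := h4 f 1 heq h1ne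
          have : f - c • 1 = 0 :=
            order_lt_one_eq_zero ⟨h0, h1, h2, h3, h4⟩ hlt
          refine ⟨c, ?_⟩
          have : f = c • 1 := by linear_combination (norm := module) this
          rw [this, Algebra.algebraMap_eq_smul_one]
      · rintro ⟨c, rfl⟩
        by_cases hc : c = 0
        · simp [hc, (h0 0).mpr rfl]
        · rw [Algebra.algebraMap_eq_smul_one, h1 c 1 hc]
  · rintro ⟨⟨h0, h1, h2, h3, h3', h4⟩, hU⟩
    refine ⟨h0, h1, h2, ?_, ?_⟩
    · intro f g h hfg hh
      by_cases hh1 : ρ 1 < ρ h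
      · exact h3' f g h hfg hh1
      · have : h ∈ Set.range (algebraMap F R) := by
          rw [← hU]; exact not_lt.mp hh1
        obtain ⟨c, rfl⟩ := this
        have hc : c ≠ 0 := fun h' => hh (by rw [h']; simp)
        have e1 : f * algebraMap F R c = c • f := by
          rw [Algebra.smul_def, mul_comm]
        have e2 : g * algebraMap F R c = c • g := by
          rw [Algebra.smul_def, mul_comm]
        rw [e1, e2, h1 c f hc, h1 c g hc]
        exact hfg
    · intro f g hfg hne
      by_cases h1f : ρ 1 < ρ f
      · obtain ⟨c, hc, hlt⟩ := h4 f g hfg h1f (hfg ▸ h1f)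
        exact ⟨c, hc, by rwa [hfg] at hlt⟩
      · have hfU : f ∈ Set.range (algebraMap F R) := by
          rw [← hU]; exact not_lt.mp h1f
        have hgU : g ∈ Set.range (algebraMap F R) := by
          rw [← hU]
          show ρ g ≤ ρ 1
          rw [← hfg]
          exact not_lt.mp h1f
        obtain ⟨a, rfl⟩ := hfU
        obtain ⟨b, rfl⟩ := hgU
        have ha : a ≠ 0 := by
          intro h'
          rw [h'] at hne
          simp [(h0 0).mpr rfl] at hne
        have hb : b ≠ 0 := by
          have hgne : ρ ((algebraMap F R) b) ≠ ⊥ := hfg ▸ hne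
          intro h'
          rw [h'] at hgne
          simp [(h0 0).mpr rfl] at hgne
        refine ⟨a / b, div_ne_zero ha hb, ?_⟩
        have : algebraMap F R a - (a / b) • algebraMap F R b = 0 := by
          rw [Algebra.smul_def, ← map_mul, div_mul_cancel₀ a hb, sub_self]
        rw [this, (h0 0).mpr rfl]
        exact Ne.bot_lt (by rwa [← hfg])
end

section
/- If ρ is a near order function on an F-algebra R, then no element of M_ρ = {f ∈ R : ρ(f) > ρ(1)} is a zero divisor: for f ∈ M_ρ and g ∈ R with g ≠ 0, we have fg ≠ 0. -/
/-- elements of `M_ρ` are not zero divisors. -/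
theorem stmt_4 {F R : Type*} [Field F] [CommRing R] [Algebra F R]
    (ρ : R → WithBot ℕ) (hρ : IsNearOrder F ρ)
    (f g : R) (hf : ρ 1 < ρ f) (hg : g ≠ 0) :
    f * g ≠ 0 := by
  obtain ⟨h0, -, -, -, h5, -⟩ := hρ
  intro hfg
  have hz : ρ (0 : R) = ⊥ := (h0 0).mpr rfl
  have hgpos : ρ 0 < ρ g := by
    rw [hz]
    exact lt_of_le_of_ne bot_le fun h => hg ((h0 g).mp h.symm)
  have := h5 0 g f hgpos hf
  rw [zero_mul, hz] at this
  have : g * f ≠ 0 := fun h => by simp [(h0 (g * f)).mpr h] at this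
  exact this (by rw [mul_comm]; exact hfg)
end

section
/- If ρ is a near weight function on an F-algebra R, then the set U_ρ = {f ∈ R : ρ(f) ≤ ρ(1)} is closed under multiplication and is an F-subalgebra of R. -/
/-- A near weight function: a normal near order function satisfying (N5).
Normality: `ρ` takes the value `0` on all nonzero elements of
`U_ρ = {f : ρ(f) ≤ ρ(1)}`, and `gcd ρ(M_ρ) = 1` (every common divisor of the
values of `ρ` on `M_ρ = {f : ρ(f) > ρ(1)}` is `1`, provided `M_ρ ≠ ∅`). -/
def IsNearWeight (F : Type*) {R : Type*} [Field F] [CommRing R] [Algebra F R]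
    (ρ : R → WithBot ℕ) : Prop :=
  IsNearOrder F ρ ∧
  (∀ f : R, f ≠ 0 → ρ f ≤ ρ 1 → ρ f = 0) ∧
  ((∃ f : R, ρ 1 < ρ f) →
    ∀ d : ℕ, (∀ f : R, ρ 1 < ρ f → (d : ℕ) ∣ WithBot.unbotD 0 (ρ f)) → d = 1) ∧
  (∀ f g : R, ρ (f * g) ≤ ρ f + ρ g) ∧
  (∀ f g : R, ρ 1 < ρ f → ρ 1 < ρ g → ρ (f * g) = ρ f + ρ g)

/-- for a near weight `ρ`, the set `U_ρ` is closed under products and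
is an `F`-subalgebra of `R`. -/
theorem stmt_8 {F R : Type*} [Field F] [CommRing R] [Algebra F R]
    (ρ : R → WithBot ℕ) (hρ : IsNearWeight F ρ) :
    (∀ f g : R, ρ f ≤ ρ 1 → ρ g ≤ ρ 1 → ρ (f * g) ≤ ρ 1) ∧
    (∃ S : Subalgebra F R, (S : Set R) = {f : R | ρ f ≤ ρ 1}) := by
  obtain ⟨⟨hN0, hN1, hN2, -⟩, hnorm, -, hN5, -⟩ := hρ
  have hzero : ρ (0 : R) = ⊥ := (hN0 0).mpr rfl
  have hmul : ∀ f g : R, ρ f ≤ ρ 1 → ρ g ≤ ρ 1 → ρ (f * g) ≤ ρ 1 := by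
    intro f g hf hg
    rcases eq_or_ne f 0 with rfl | hf0
    · rw [zero_mul, hzero]; exact bot_le
    rcases eq_or_ne g 0 with rfl | hg0
    · rw [mul_zero, hzero]; exact bot_le
    have h1 : (1 : R) ≠ 0 := by
      intro h
      have : f = 0 := by rw [← mul_one f, h, mul_zero]
      exact hf0 this
    have hρ1 : ρ (1 : R) = 0 := hnorm 1 h1 le_rfl
    have hρf : ρ f = 0 := hnorm f hf0 hf
    have hρg : ρ g = 0 := hnorm g hg0 hg
    calc ρ (f * g) ≤ ρ f + ρ g := hN5 f g
      _ = 0 := by rw [hρf, hρg]; rfl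
      _ = ρ 1 := hρ1.symm
  refine ⟨hmul, ⟨{
    carrier := {f : R | ρ f ≤ ρ 1}
    mul_mem' := fun {a b} ha hb => hmul a b ha hb
    one_mem' := Set.mem_setOf_eq ▸ le_rfl
    add_mem' := fun {a b} ha hb => le_trans (hN2 a b) (max_le ha hb)
    zero_mem' := by simp only [Set.mem_setOf_eq, hzero]; exact bot_le
    algebraMap_mem' := fun c => by
      rcases eq_or_ne c 0 with rfl | hc
      · simp only [map_zero, Set.mem_setOf_eq, hzero]; exact bot_le
      · simp only [Set.mem_setOf_eq, Algebra.algebraMap_eq_smul_one]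
        rw [hN1 c 1 hc] }, rfl⟩⟩
end

section
/- If ρ is a near weight function on an F-algebra R, then ρ(R \ {0}) is a numerical semigroup of finite genus, i.e., a submonoid of (ℕ, +) whose complement in ℕ is finite. -/
lemma aux_cofinite (S : Set ℕ) (h0 : 0 ∈ S)
    (hadd : ∀ a ∈ S, ∀ b ∈ S, a + b ∈ S)
    (hgcd : ∀ d : ℕ, (∀ n ∈ S, d ∣ n) → d = 1) : Sᶜ.Finite := by
  set H : AddSubgroup ℤ :=
    { carrier := {x | ∃ u ∈ S, ∃ v ∈ S, x = (u : ℤ) - v}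
      zero_mem' := ⟨0, h0, 0, h0, by simp⟩
      add_mem' := by
        rintro x y ⟨u, hu, v, hv, rfl⟩ ⟨u', hu', v', hv', rfl⟩
        exact ⟨u + u', hadd u hu u' hu', v + v', hadd v hv v' hv', by push_cast; ring⟩
      neg_mem' := by
        rintro x ⟨u, hu, v, hv, rfl⟩
        exact ⟨v, hv, u, hu, by ring⟩ } with hH
  obtain ⟨g, hg⟩ := Int.subgroup_cyclic H
  have hdvd : ∀ n ∈ S, g ∣ (n : ℤ) := by
    intro n hn
    have hmem : (n : ℤ) ∈ H := ⟨n, hn, 0, h0, by simp⟩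
    rw [hg, AddSubgroup.mem_closure_singleton] at hmem
    obtain ⟨k, hk⟩ := hmem
    exact Dvd.intro_left k hk
  have habs : g.natAbs = 1 := by
    apply hgcd
    intro n hn
    exact Int.ofNat_dvd.mp (Int.natAbs_dvd.mpr (hdvd n hn))
  have h1H : (1 : ℤ) ∈ H := by
    have hgH : g ∈ H := hg ▸ AddSubgroup.mem_closure_singleton_self g
    have : g = 1 ∨ g = -1 := by omega
    rcases this with h | h
    · rwa [h] at hgH
    · have := H.neg_mem hgH
      rw [h] at this; simpa using this
  obtain ⟨u, hu, v, hv, huv⟩ := h1H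
  have huv' : u = v + 1 := by omega
  have hmul : ∀ k n, n ∈ S → k * n ∈ S := by
    intro k
    induction k with
    | zero => intro n _; simpa using h0
    | succ k ih => intro n hn; have := hadd _ (ih n hn) _ hn
                   simpa [Nat.succ_mul] using this
  rcases Nat.eq_zero_or_pos v with hv0 | hvpos
  · -- then 1 ∈ S, so S = univ
    subst hv0
    have h1 : 1 ∈ S := by rwa [show u = 1 by omega] at hu
    have : ∀ n, n ∈ S := fun n => by simpa using hmul n 1 h1
    have : Sᶜ = ∅ := Set.eq_empty_iff_forall_notMem.mpr (fun n hn => hn (this n))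
    simp [this]
  · apply Set.Finite.subset (Set.finite_Iio (v * v))
    intro n hn
    simp only [Set.mem_Iio]
    by_contra hge
    push_neg at hge
    apply hn
    have hq : v ≤ n / v := (Nat.le_div_iff_mul_le hvpos).mpr hge
    have hr : n % v < v := Nat.mod_lt n hvpos
    have hdm : v * (n / v) + n % v = n := Nat.div_add_mod n v
    obtain ⟨c, hc⟩ := Nat.exists_eq_add_of_le (le_trans (le_of_lt hr) hq)
    have hrep : (n / v - n % v) * v + (n % v) * (v + 1) = n := by
      rw [hc, Nat.add_sub_cancel_left]
      rw [hc] at hdm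
      calc c * v + n % v * (v + 1) = v * (n % v + c) + n % v := by ring
        _ = n := hdm
    have : (n / v - n % v) * v + (n % v) * (v + 1) ∈ S :=
      hadd _ (hmul _ _ hv) _ (hmul _ _ (by rwa [huv'] at hu))
    rwa [hrep] at this


/-- for a near weight `ρ` (with `M_ρ ≠ ∅`), the value set
`ρ(R \ {0})` is a numerical semigroup of finite genus: a submonoid of `(ℕ,+)`
with finite complement. -/
theorem stmt_9 {F R : Type*} [Field F] [CommRing R] [Algebra F R]
    (ρ : R → WithBot ℕ) (hρ : IsNearWeight F ρ)
    (hM : ∃ f : R, ρ 1 < ρ f) :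
    (0 : ℕ) ∈ {n : ℕ | ∃ f : R, f ≠ 0 ∧ ρ f = (n : WithBot ℕ)} ∧
    (∀ a b : ℕ, a ∈ {n : ℕ | ∃ f : R, f ≠ 0 ∧ ρ f = (n : WithBot ℕ)} →
      b ∈ {n : ℕ | ∃ f : R, f ≠ 0 ∧ ρ f = (n : WithBot ℕ)} →
      a + b ∈ {n : ℕ | ∃ f : R, f ≠ 0 ∧ ρ f = (n : WithBot ℕ)}) ∧
    {n : ℕ | ∃ f : R, f ≠ 0 ∧ ρ f = (n : WithBot ℕ)}ᶜ.Finite := by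
  obtain ⟨hNO, hnorm, hgcd, hN5, hN5e⟩ := hρ
  have h0iff := hNO.1
  have h1ne : (1 : R) ≠ 0 := by
    intro h
    obtain ⟨f, hf⟩ := hM
    have hf0 : f = 0 := by rw [← mul_one f, h, mul_zero]
    rw [hf0, (h0iff 0).mpr rfl] at hf
    exact absurd hf not_lt_bot
  have hρ1 : ρ 1 = 0 := hnorm 1 h1ne le_rfl
  have h0S : (0 : ℕ) ∈ {n : ℕ | ∃ f : R, f ≠ 0 ∧ ρ f = (n : WithBot ℕ)} :=
    ⟨1, h1ne, by rw [hρ1]; simp⟩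
  have haddS : ∀ a b : ℕ, a ∈ {n : ℕ | ∃ f : R, f ≠ 0 ∧ ρ f = (n : WithBot ℕ)} →
      b ∈ {n : ℕ | ∃ f : R, f ≠ 0 ∧ ρ f = (n : WithBot ℕ)} →
      a + b ∈ {n : ℕ | ∃ f : R, f ≠ 0 ∧ ρ f = (n : WithBot ℕ)} := by
    rintro a b ⟨f, hf, hfa⟩ ⟨g, hg, hgb⟩
    rcases Nat.eq_zero_or_pos a with ha | ha
    · exact ha ▸ ⟨g, hg, by simpa [ha] using hgb⟩
    rcases Nat.eq_zero_or_pos b with hb | hb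
    · exact ⟨f, hf, by simpa [hb] using hfa⟩
    have hfM : ρ 1 < ρ f := by
      rw [hρ1, hfa]; exact_mod_cast ha
    have hgM : ρ 1 < ρ g := by
      rw [hρ1, hgb]; exact_mod_cast hb
    have hmul : ρ (f * g) = ((a + b : ℕ) : WithBot ℕ) := by
      rw [hN5e f g hfM hgM, hfa, hgb]; push_cast; rfl
    refine ⟨f * g, ?_, hmul⟩
    intro h
    rw [h, (h0iff 0).mpr rfl] at hmul
    exact absurd hmul.symm (WithBot.coe_ne_bot)
  refine ⟨h0S, haddS, ?_⟩
  apply aux_cofinite _ h0S (fun a ha b hb => haddS a b ha hb)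
  intro d hd
  apply hgcd hM d
  intro f hf
  have hfne : f ≠ 0 := by
    intro h
    rw [h, (h0iff 0).mpr rfl] at hf
    exact absurd hf not_lt_bot
  have : ρ f ≠ ⊥ := fun h => hfne ((h0iff f).mp h)
  obtain ⟨n, hn⟩ := WithBot.ne_bot_iff_exists.mp this
  have hnS : n ∈ {n : ℕ | ∃ f : R, f ≠ 0 ∧ ρ f = (n : WithBot ℕ)} := ⟨f, hfne, hn.symm⟩
  have := hd n hnS
  rwa [← hn, WithBot.unbotD_coe]
end

section
/- Let ρ, σ be two near weight functions on an F-algebra R such that the subsemigroup H(ρ,σ) = {(ρ(f), σ(f)) : f ∈ R, f ≠ 0} of ℕ² has finite complement in ℕ². Then ρ(R\{0}) = ℕ and σ(R\{0}) = ℕ. -/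
/-- The semigroup `H(ρ,σ) = {(ρ(f), σ(f)) : f ∈ R \ {0}} ⊆ ℕ²`. -/
def Hset {R : Type*} [CommRing R] (ρ σ : R → WithBot ℕ) : Set (ℕ × ℕ) :=
  {p : ℕ × ℕ | ∃ f : R, f ≠ 0 ∧ ρ f = (p.1 : WithBot ℕ) ∧ σ f = (p.2 : WithBot ℕ)}

/-- if `H(ρ,σ)` has finite complement in `ℕ²`, then
`ρ(R \ {0}) = ℕ` and `σ(R \ {0}) = ℕ`. -/
theorem stmt_11 {F R : Type*} [Field F] [CommRing R] [Algebra F R]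
    (ρ σ : R → WithBot ℕ) (hρ : IsNearWeight F ρ) (hσ : IsNearWeight F σ)
    (hfin : {p : ℕ × ℕ | p ∉ Hset ρ σ}.Finite) :
    {n : ℕ | ∃ f : R, f ≠ 0 ∧ ρ f = (n : WithBot ℕ)} = Set.univ ∧
    {n : ℕ | ∃ f : R, f ≠ 0 ∧ σ f = (n : WithBot ℕ)} = Set.univ := by
  constructor
  · ext n
    simp only [Set.mem_setOf_eq, Set.mem_univ, iff_true]
    obtain ⟨m, hm⟩ : ∃ m, (n, m) ∈ Hset ρ σ := by
      by_contra h
      push_neg at h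
      have hsub : Set.range (fun m => ((n, m) : ℕ × ℕ)) ⊆ {p | p ∉ Hset ρ σ} := by
        rintro _ ⟨m, rfl⟩; exact h m
      exact Set.infinite_range_of_injective
        (fun a b hab => (Prod.mk.injEq _ _ _ _ ▸ hab : _ = _ ∧ a = b).2)
        (hfin.subset hsub)
    obtain ⟨f, hf0, hf1, _⟩ := hm
    exact ⟨f, hf0, hf1⟩
  · ext n
    simp only [Set.mem_setOf_eq, Set.mem_univ, iff_true]
    obtain ⟨m, hm⟩ : ∃ m, (m, n) ∈ Hset ρ σ := by
      by_contra h
      push_neg at h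
      have hsub : Set.range (fun m => ((m, n) : ℕ × ℕ)) ⊆ {p | p ∉ Hset ρ σ} := by
        rintro _ ⟨m, rfl⟩; exact h m
      exact Set.infinite_range_of_injective
        (fun a b hab => (Prod.mk.injEq _ _ _ _ ▸ hab : a = b ∧ _ = _).1)
        (hfin.subset hsub)
    obtain ⟨f, hf0, _, hf2⟩ := hm
    exact ⟨f, hf0, hf2⟩
end

section
/- Let ρ, σ be well agreeing near weights on an F-algebra R. Choose f₀ = 1, and for each i ≥ 1 choose f_i ∈ R with ρ(f_i) = i; let H(σ) = σ(U_ρ \ {0}) = {0 = m₀ < m₁ < m₂ < ...} and choose g_j ∈ U_ρ with σ(g_j) = m_j for j ≥ 1. Then B = {f_i : i ∈ ℕ₀} ∪ {g_j : j ≥ 1} is a basis of R as an F-vector space. -/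
section Helpers
variable {F R : Type*} [Field F] [CommRing R] [Algebra F R] (ρ : R → WithBot ℕ)

lemma nw_neg (hsmul : ∀ (c : F) (x : R), c ≠ 0 → ρ (c • x) = ρ x) (x : R) :
    ρ (-x) = ρ x := by
  have := hsmul (-1) x (by simp)
  simpa using this

lemma nw_add_eq (hsmul : ∀ (c : F) (x : R), c ≠ 0 → ρ (c • x) = ρ x)
    (hadd : ∀ x y : R, ρ (x + y) ≤ max (ρ x) (ρ y))
    {a b : R} (hlt : ρ b < ρ a) : ρ (a + b) = ρ a := by
  refine le_antisymm ((hadd a b).trans (by simp [hlt.le])) ?_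
  by_contra hcon
  push_neg at hcon
  have h1 : ρ a = ρ (a + b + -b) := by ring_nf
  have h2 : ρ (a + b + -b) ≤ max (ρ (a + b)) (ρ (-b)) := hadd _ _
  rw [nw_neg ρ hsmul] at h2
  have : ρ a < ρ a := lt_of_le_of_lt (h1 ▸ h2) (max_lt hcon hlt)
  exact absurd this (lt_irrefl _)

lemma nw_sum_le (hbot : ∀ x : R, ρ x = ⊥ ↔ x = 0)
    (hadd : ∀ x y : R, ρ (x + y) ≤ max (ρ x) (ρ y))
    {ι : Type*} (s : Finset ι) (x : ι → R) :
    ρ (∑ i ∈ s, x i) ≤ s.sup (fun i => ρ (x i)) := by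
  classical
  induction s using Finset.cons_induction with
  | empty => simp [(hbot 0).mpr rfl]
  | cons a t hat ih =>
    rw [Finset.sum_cons, Finset.sup_cons]
    exact (hadd _ _).trans (max_le_max le_rfl ih)

lemma nw_combo (hbot : ∀ x : R, ρ x = ⊥ ↔ x = 0)
    (hsmul : ∀ (c : F) (x : R), c ≠ 0 → ρ (c • x) = ρ x)
    (hadd : ∀ x y : R, ρ (x + y) ≤ max (ρ x) (ρ y))
    {ι : Type*} (s : Finset ι) (c : ι → F) (v : ι → R) (w : ι → ℕ)
    (hv : ∀ i ∈ s, c i ≠ 0 → ρ (v i) = (w i : WithBot ℕ))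
    (hinj : ∀ i ∈ s, ∀ j ∈ s, c i ≠ 0 → c j ≠ 0 → w i = w j → i = j)
    (hne : ∃ i ∈ s, c i ≠ 0) :
    ∃ i ∈ s, c i ≠ 0 ∧ ρ (∑ x ∈ s, c x • v x) = (w i : WithBot ℕ) := by
  classical
  set t := s.filter (fun i => c i ≠ 0) with ht
  have hsum : ∑ x ∈ s, c x • v x = ∑ x ∈ t, c x • v x := by
    refine (Finset.sum_subset (Finset.filter_subset _ _) ?_).symm
    intro x hxs hxt
    have : c x = 0 := by
      by_contra hc
      exact hxt (Finset.mem_filter.mpr ⟨hxs, hc⟩)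
    simp [this]
  obtain ⟨i₀, hi₀⟩ := hne
  have htne : t.Nonempty := ⟨i₀, Finset.mem_filter.mpr ⟨hi₀.1, hi₀.2⟩⟩
  obtain ⟨b, hbt, hmax⟩ := Finset.exists_max_image t w htne
  have hbs : b ∈ s := (Finset.mem_filter.mp hbt).1
  have hbc : c b ≠ 0 := (Finset.mem_filter.mp hbt).2
  refine ⟨b, hbs, hbc, ?_⟩
  rw [hsum, ← Finset.add_sum_erase t _ hbt]
  have hrest : ρ (∑ x ∈ t.erase b, c x • v x) < (w b : WithBot ℕ) := by
    refine lt_of_le_of_lt (nw_sum_le ρ hbot hadd _ _) ?_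
    rw [Finset.sup_lt_iff (WithBot.bot_lt_coe _)]
    intro x hx
    have hxs : x ∈ s := (Finset.mem_filter.mp (Finset.mem_of_mem_erase hx)).1
    have hxc : c x ≠ 0 := (Finset.mem_filter.mp (Finset.mem_of_mem_erase hx)).2
    rw [hsmul _ _ hxc, hv x hxs hxc]
    have hle : w x ≤ w b := hmax x (Finset.mem_of_mem_erase hx)
    have hne' : w x ≠ w b := fun h =>
      (Finset.ne_of_mem_erase hx) (hinj x hxs b hbs hxc hbc h)
    exact_mod_cast (by omega : w x < w b)
  have hb' : ρ (c b • v b) = (w b : WithBot ℕ) := by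
    rw [hsmul _ _ hbc, hv b hbs hbc]
  rw [nw_add_eq ρ hsmul hadd (by rw [hb']; exact hrest), hb']

end Helpers

/-- for well agreeing near weights `ρ, σ`, with `f₀ = 1`,
`ρ(f_i) = i` for `i ≥ 1`, and `g_j ∈ U_ρ` with `σ(g_j) = m_j`, where
`H(σ) = σ(U_ρ \ {0}) = {0 = m₀ < m₁ < ⋯}`, the family
`B = {f_i : i ∈ ℕ} ∪ {g_j : j ≥ 1}` is a basis of `R` over `F`. -/
theorem stmt_13 {F R : Type*} [Field F] [CommRing R] [Algebra F R]
    (ρ σ : R → WithBot ℕ) (hρ : IsNearWeight F ρ) (hσ : IsNearWeight F σ)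
    (hfin : {p : ℕ × ℕ | p ∉ Hset ρ σ}.Finite)
    (hU : {h : R | ρ h ≤ ρ 1} ∩ {h : R | σ h ≤ σ 1} = Set.range (algebraMap F R))
    (f : ℕ → R) (hf0 : f 0 = 1)
    (hf : ∀ i : ℕ, 1 ≤ i → ρ (f i) = (i : WithBot ℕ))
    (m : ℕ → ℕ) (hm : StrictMono m) (hm0 : m 0 = 0)
    (hmrange : Set.range m = {n : ℕ | ∃ h : R, h ≠ 0 ∧ ρ h ≤ ρ 1 ∧ σ h = (n : WithBot ℕ)})
    (g : ℕ → R) (hg : ∀ j : ℕ, 1 ≤ j → ρ (g j) ≤ ρ 1 ∧ σ (g j) = (m j : WithBot ℕ)) :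
    LinearIndependent F (Sum.elim f (fun j : ℕ => g (j + 1))) ∧
    Submodule.span F (Set.range (Sum.elim f (fun j : ℕ => g (j + 1)))) = ⊤ := by
  classical
  obtain ⟨⟨hρbot, hρsmul, hρadd, _, _, hρN4⟩, hρnorm, -, -, -⟩ := hρ
  obtain ⟨⟨hσbot, hσsmul, hσadd, _, _, hσN4⟩, hσnorm, -, -, -⟩ := hσ
  -- R is nontrivial
  have hf1ne : f 1 ≠ 0 := by
    intro h
    have := hf 1 le_rfl
    rw [h, (hρbot 0).mpr rfl] at this
    exact absurd this.symm (by simp)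
  have hone : (1 : R) ≠ 0 := by
    intro h
    apply hf1ne
    calc f 1 = f 1 * 1 := (mul_one _).symm
    _ = f 1 * 0 := by rw [h]
    _ = 0 := mul_zero _
  have hρ1 : ρ 1 = 0 := hρnorm 1 hone le_rfl
  have hσ1 : σ 1 = 0 := hσnorm 1 hone le_rfl
  set v : ℕ ⊕ ℕ → R := Sum.elim f (fun j : ℕ => g (j + 1)) with hv
  -- values of ρ on the "U" part
  have hρf0 : ρ (f 0) = 0 := by rw [hf0, hρ1]
  have hρg : ∀ j : ℕ, ρ (g (j + 1)) ≤ 0 := fun j => hρ1 ▸ (hg (j+1) (by omega)).1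
  constructor
  · -- linear independence
    rw [linearIndependent_iff']
    intro s c hsum x hxs
    set P : ℕ ⊕ ℕ → Prop := fun x => ∃ i, 1 ≤ i ∧ x = Sum.inl i with hP
    have hsplit := Finset.sum_filter_add_sum_filter_not s P (fun x => c x • v x)
    set sM := s.filter P with hsM
    set sU := s.filter (fun x => ¬ P x) with hsU
    -- coefficients on the M part vanish
    have hM0 : ∀ y ∈ sM, c y = 0 := by
      by_contra hcon
      push_neg at hcon
      obtain ⟨y₀, hy₀, hcy₀⟩ := hcon
      have hcombo := nw_combo ρ hρbot hρsmul hρadd sM c v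
        (Sum.elim id (fun _ => 0))
        (by
          intro i hi _
          obtain ⟨k, hk1, hk2⟩ := (Finset.mem_filter.mp hi).2
          subst hk2
          simpa [v] using hf k hk1)
        (by
          intro i hi j hj _ _ hw
          obtain ⟨k, hk1, hk2⟩ := (Finset.mem_filter.mp hi).2
          obtain ⟨l, hl1, hl2⟩ := (Finset.mem_filter.mp hj).2
          subst hk2; subst hl2
          simpa using hw)
        ⟨y₀, hy₀, hcy₀⟩
      obtain ⟨b, hbM, hbc, hρA⟩ := hcombo
      obtain ⟨k, hk1, hk2⟩ := (Finset.mem_filter.mp hbM).2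
      have hwb : (Sum.elim id (fun _ => 0) b : ℕ) = k := by rw [hk2]; rfl
      -- the U part has ρ ≤ 0
      have hρB : ρ (∑ x ∈ sU, c x • v x) ≤ 0 := by
        refine (nw_sum_le ρ hρbot hρadd _ _).trans (Finset.sup_le ?_)
        intro x hx
        by_cases hcx : c x = 0
        · simp [hcx, (hρbot 0).mpr rfl]
        · rw [hρsmul _ _ hcx]
          have hnx : ¬ P x := (Finset.mem_filter.mp hx).2
          match x with
          | Sum.inl i =>
            have : i = 0 := by
              by_contra hi0
              exact hnx ⟨i, by omega, rfl⟩
            subst this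
            simpa [v] using hρf0.le
          | Sum.inr j => simpa [v] using hρg j
      have hlt : ρ (∑ x ∈ sU, c x • v x) < ρ (∑ x ∈ sM, c x • v x) := by
        rw [hρA, hwb]
        exact lt_of_le_of_lt hρB (by exact_mod_cast (by omega : (0:ℕ) < k))
      have : ρ (0 : R) = ρ (∑ x ∈ sM, c x • v x) := by
        rw [← hsum, ← hsplit]
        exact nw_add_eq ρ hρsmul hρadd hlt
      rw [(hρbot 0).mpr rfl, hρA, hwb] at this
      exact absurd this.symm (by simp)
    -- hence the M part sum is zero, so the U part sum is zero
    have hMzero : ∑ x ∈ sM, c x • v x = 0 :=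
      Finset.sum_eq_zero fun y hy => by rw [hM0 y hy, zero_smul]
    have hUzero : ∑ x ∈ sU, c x • v x = 0 := by
      have := hsplit
      rw [hMzero, zero_add, hsum] at this
      exact this
    have hU0 : ∀ y ∈ sU, c y = 0 := by
      by_contra hcon
      push_neg at hcon
      obtain ⟨y₀, hy₀, hcy₀⟩ := hcon
      have hcombo := nw_combo σ hσbot hσsmul hσadd sU c v
        (Sum.elim (fun _ => 0) (fun j => m (j + 1)))
        (by
          intro i hi _
          have hnx : ¬ P i := (Finset.mem_filter.mp hi).2
          match i with
          | Sum.inl k =>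
            have : k = 0 := by
              by_contra hk0
              exact hnx ⟨k, by omega, rfl⟩
            subst this
            simpa [v, hf0] using hσ1
          | Sum.inr j =>
            simpa [v] using (hg (j+1) (by omega)).2)
        (by
          intro i hi j hj _ _ hw
          have hm1 : ∀ j : ℕ, 0 < m (j + 1) := fun j => by
            have := hm (show 0 < j + 1 by omega)
            omega
          match i, j with
          | Sum.inl k, Sum.inl l =>
            have hk : ¬ P (Sum.inl k) := (Finset.mem_filter.mp hi).2
            have hl : ¬ P (Sum.inl l) := (Finset.mem_filter.mp hj).2
            have hk0 : k = 0 := by by_contra h0; exact hk ⟨k, by omega, rfl⟩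
            have hl0 : l = 0 := by by_contra h0; exact hl ⟨l, by omega, rfl⟩
            rw [hk0, hl0]
          | Sum.inl k, Sum.inr l =>
            exact absurd hw.symm (by have := hm1 l; simp; omega)
          | Sum.inr k, Sum.inl l =>
            exact absurd hw (by have := hm1 k; simp; omega)
          | Sum.inr k, Sum.inr l =>
            have hkl : k + 1 = l + 1 := hm.injective (by simpa using hw)
            have : k = l := by omega
            rw [this])
        ⟨y₀, hy₀, hcy₀⟩
      obtain ⟨b, hbU, hbc, hσB⟩ := hcombo
      rw [hUzero, (hσbot 0).mpr rfl] at hσB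
      exact absurd hσB.symm (by simp)
    by_cases hPx : P x
    · exact hM0 x (Finset.mem_filter.mpr ⟨hxs, hPx⟩)
    · exact hU0 x (Finset.mem_filter.mpr ⟨hxs, hPx⟩)
  · -- spanning
    set S := Submodule.span F (Set.range v) with hS
    have hfS : ∀ i : ℕ, f i ∈ S := fun i =>
      Submodule.subset_span ⟨Sum.inl i, rfl⟩
    have hgS : ∀ j : ℕ, 1 ≤ j → g j ∈ S := by
      intro j hj
      refine Submodule.subset_span ⟨Sum.inr (j - 1), ?_⟩
      simp [v, Nat.sub_add_cancel hj]
    have step1 : ∀ k : ℕ, ∀ h : R, ρ h ≤ ρ 1 → σ h ≤ (k : WithBot ℕ) → h ∈ S := by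
      intro k
      induction k using Nat.strong_induction_on with
      | _ k IH =>
        intro h hρh hσh
        by_cases hz : h = 0
        · simp [hz]
        by_cases hUσ : σ h ≤ σ 1
        · have hmem : h ∈ {h : R | ρ h ≤ ρ 1} ∩ {h : R | σ h ≤ σ 1} := ⟨hρh, hUσ⟩
          rw [hU] at hmem
          obtain ⟨a, ha⟩ := hmem
          have : h = a • f 0 := by
            rw [hf0, ← ha, Algebra.algebraMap_eq_smul_one]
          rw [this]
          exact Submodule.smul_mem _ _ (hfS 0)
        · push_neg at hUσ
          obtain ⟨k', hk'⟩ : ∃ k' : ℕ, σ h = (k' : WithBot ℕ) := by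
            cases hsh : σ h with
            | bot => exact absurd ((hσbot h).mp hsh) hz
            | coe k' => exact ⟨k', rfl⟩
          have hk'le : k' ≤ k := by
            rw [hk'] at hσh
            exact_mod_cast hσh
          have hk'pos : 0 < k' := by
            rw [hσ1, hk'] at hUσ
            exact_mod_cast hUσ
          obtain ⟨j, hj⟩ : ∃ j, m j = k' := by
            have : k' ∈ Set.range m := by
              rw [hmrange]
              exact ⟨h, hz, hρh, hk'⟩
            exact this
          have hj1 : 1 ≤ j := by
            rcases Nat.eq_zero_or_pos j with h0 | h1
            · rw [h0, hm0] at hj; omega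
            · exact h1
          obtain ⟨hgρ, hgσ⟩ := hg j hj1
          have hσgj : σ (g j) = σ h := by rw [hgσ, hj, hk']
          obtain ⟨a, ha0, halt⟩ := hσN4 h (g j) hσgj.symm hUσ (by rw [hσgj]; exact hUσ)
          have hρh' : ρ (h - a • g j) ≤ ρ 1 := by
            rw [sub_eq_add_neg]
            refine (hρadd _ _).trans (max_le hρh ?_)
            rw [nw_neg ρ hρsmul, hρsmul _ _ ha0]
            exact hgρ
          cases hsh' : σ (h - a • g j) with
          | bot =>
            have : h = a • g j := by
              have := (hσbot _).mp hsh'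
              linear_combination this
            rw [this]
            exact Submodule.smul_mem _ _ (hgS j hj1)
          | coe b =>
            have hbk' : b < k' := by
              rw [hsh', hk', Nat.cast_withBot] at halt
              exact WithBot.coe_lt_coe.mp halt
            have hmem : h - a • g j ∈ S :=
              IH b (by omega) _ hρh' (le_of_eq hsh')
            have : h = (h - a • g j) + a • g j := by ring
            rw [this]
            exact Submodule.add_mem _ hmem (Submodule.smul_mem _ _ (hgS j hj1))
    have step2 : ∀ n : ℕ, ∀ h : R, ρ h ≤ (n : WithBot ℕ) → h ∈ S := by
      intro n
      induction n using Nat.strong_induction_on with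
      | _ n IH =>
        intro h hρh
        by_cases hz : h = 0
        · simp [hz]
        by_cases hUρ : ρ h ≤ ρ 1
        · obtain ⟨k, hk⟩ : ∃ k : ℕ, σ h = (k : WithBot ℕ) := by
            cases hsh : σ h with
            | bot => exact absurd ((hσbot h).mp hsh) hz
            | coe k => exact ⟨k, rfl⟩
          exact step1 k h hUρ (le_of_eq hk)
        · push_neg at hUρ
          obtain ⟨n', hn'⟩ : ∃ n' : ℕ, ρ h = (n' : WithBot ℕ) := by
            cases hsh : ρ h with
            | bot => exact absurd ((hρbot h).mp hsh) hz
            | coe n' => exact ⟨n', rfl⟩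
          have hn'le : n' ≤ n := by
            rw [hn'] at hρh
            exact_mod_cast hρh
          have hn'pos : 1 ≤ n' := by
            rw [hρ1, hn'] at hUρ
            exact_mod_cast hUρ
          have hρfn : ρ (f n') = ρ h := by rw [hf n' hn'pos, hn']
          obtain ⟨a, ha0, halt⟩ := hρN4 h (f n') hρfn.symm hUρ (by rw [hρfn]; exact hUρ)
          cases hsh' : ρ (h - a • f n') with
          | bot =>
            have : h = a • f n' := by
              have := (hρbot _).mp hsh'
              linear_combination this
            rw [this]
            exact Submodule.smul_mem _ _ (hfS n')
          | coe b =>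
            have hbn' : b < n' := by
              rw [hsh', hn', Nat.cast_withBot] at halt
              exact WithBot.coe_lt_coe.mp halt
            have hmem : h - a • f n' ∈ S :=
              IH b (by omega) _ (le_of_eq hsh')
            have : h = (h - a • f n') + a • f n' := by ring
            rw [this]
            exact Submodule.add_mem _ hmem (Submodule.smul_mem _ _ (hfS n'))
    rw [eq_top_iff]
    intro h _
    cases hsh : ρ h with
    | bot =>
      rw [(hρbot h).mp hsh]
      exact Submodule.zero_mem _
    | coe n => exact step2 n h (le_of_eq hsh)
end

section
/- Let ρ, σ be well agreeing near weights on an F-algebra R and let {f_i} ∪ {g_j} be a good basis, i.e., σ(f_i) = min{σ(f) : f ∈ R, ρ(f) = i} for each i. Then for every i, either σ(f_i) = 0 or σ(f_i) is a gap of the numerical semigroup H(σ) = {m : (0,m) ∈ H(ρ,σ)}. -/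
/-- for a good basis of well agreeing near weights, each value
`σ(f_i)` is either `0` or a gap of `H(σ) = {m : (0,m) ∈ H(ρ,σ)}`. -/
theorem stmt_14 {F R : Type*} [Field F] [CommRing R] [Algebra F R]
    (ρ σ : R → WithBot ℕ) (hρ : IsNearWeight F ρ) (hσ : IsNearWeight F σ)
    (hfin : {p : ℕ × ℕ | p ∉ Hset ρ σ}.Finite)
    (hU : {h : R | ρ h ≤ ρ 1} ∩ {h : R | σ h ≤ σ 1} = Set.range (algebraMap F R))
    (f : ℕ → R) (hf0 : f 0 = 1)
    (hf : ∀ i : ℕ, 1 ≤ i → ρ (f i) = (i : WithBot ℕ))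
    (hmin : ∀ i : ℕ, 1 ≤ i → ∀ h : R, ρ h = (i : WithBot ℕ) → σ (f i) ≤ σ h) :
    ∀ i : ℕ, ∃ t : ℕ, σ (f i) = (t : WithBot ℕ) ∧
      (t = 0 ∨ (0, t) ∉ Hset ρ σ) := by
  obtain ⟨⟨hρ0, hρ1, hρ2, hρ3, hρ4, hρ5⟩, hρnorm, -, -, -⟩ := hρ
  obtain ⟨⟨hσ0, hσ1, hσ2, hσ3, hσ4, hσ5⟩, hσnorm, -, -, -⟩ := hσ
  have h1ne : (1 : R) ≠ 0 := by
    intro h10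
    have hall : f 1 = 0 := by
      calc f 1 = f 1 * 1 := (mul_one _).symm
        _ = f 1 * 0 := by rw [h10]
        _ = 0 := mul_zero _
    have hb : ρ (f 1) = ⊥ := (hρ0 (f 1)).2 hall
    rw [hf 1 le_rfl] at hb
    exact absurd hb (by simp)
  have hσ1eq : σ 1 = 0 := hσnorm 1 h1ne le_rfl
  intro i
  rcases Nat.eq_zero_or_pos i with rfl | hi
  · exact ⟨0, by rw [hf0, hσ1eq]; rfl, Or.inl rfl⟩
  · have hfi_ne : f i ≠ 0 := by
      intro h
      have hb : ρ (f i) = ⊥ := (hρ0 (f i)).2 h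
      rw [hf i hi] at hb
      exact absurd hb (by simp)
    obtain ⟨t, ht⟩ : ∃ t : ℕ, σ (f i) = (t : WithBot ℕ) := by
      cases hσt : σ (f i) with
      | bot => exact absurd ((hσ0 (f i)).1 hσt) hfi_ne
      | coe t => exact ⟨t, rfl⟩
    refine ⟨t, ht, ?_⟩
    by_contra hcon
    push_neg at hcon
    obtain ⟨ht0, g, hgne, hρg, hσg⟩ := hcon
    simp only at hρg hσg
    have hσ1lt : σ 1 < σ (f i) := by
      rw [hσ1eq, ht]
      exact_mod_cast Nat.pos_of_ne_zero ht0
    have hσ1ltg : σ 1 < σ g := by rw [hσg, ← ht]; exact hσ1lt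
    obtain ⟨c, hc, hlt⟩ := hσ5 (f i) g (by rw [ht, hσg]) hσ1lt hσ1ltg
    have hρcg : ρ (c • g) = ρ g := hρ1 c g hc
    have hlt0 : ρ (c • g) < ρ (f i) := by
      rw [hρcg, hρg, hf i hi]
      exact_mod_cast hi
    have hneg : ρ (-(c • g)) = ρ (c • g) := by
      rw [← neg_one_smul F (c • g)]
      exact hρ1 (-1) _ (by simp)
    have hub : ρ (f i - c • g) ≤ ρ (f i) := by
      rw [sub_eq_add_neg]
      refine (hρ2 (f i) (-(c • g))).trans ?_
      rw [hneg]
      exact max_le le_rfl hlt0.le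
    have hlb : ρ (f i) ≤ ρ (f i - c • g) := by
      have h := hρ2 (f i - c • g) (c • g)
      rw [sub_add_cancel] at h
      exact (le_max_iff.mp h).resolve_right (not_le.mpr hlt0)
    have hρeq : ρ (f i - c • g) = (i : WithBot ℕ) := by
      rw [← hf i hi]
      exact le_antisymm hub hlb
    exact absurd (hmin i hi _ hρeq) (not_le.mpr hlt)
end

section
/- Let ρ, σ be well agreeing near weights on an F-algebra R with a good basis {f_i} (σ(f_i) minimal among values σ(f) with ρ(f) = i). Then for every gap m of H(σ) there exists exactly one index i with σ(f_i) = m. -/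
lemma add_dominant_aux {F R : Type*} [Field F] [CommRing R] [Algebra F R]
    (τ : R → WithBot ℕ)
    (hs : ∀ (c : F) (f : R), c ≠ 0 → τ (c • f) = τ f)
    (ht : ∀ f g : R, τ (f + g) ≤ max (τ f) (τ g))
    {a b : R} (hab : τ a < τ b) : τ (a + b) = τ b := by
  refine le_antisymm ((ht a b).trans (max_le hab.le le_rfl)) ?_
  by_contra hle
  push_neg at hle
  have hb : b = (a + b) + (-1 : F) • a := by rw [neg_one_smul]; ring
  have h2 := ht (a + b) ((-1 : F) • a)
  rw [hs (-1) a (by norm_num), ← hb] at h2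
  exact absurd h2 (not_le.mpr (max_lt hle hab))

/-- for every gap `m` of `H(σ)` there is exactly one index `i`
with `σ(f_i) = m`. -/
theorem stmt_15 {F R : Type*} [Field F] [CommRing R] [Algebra F R]
    (ρ σ : R → WithBot ℕ) (hρ : IsNearWeight F ρ) (hσ : IsNearWeight F σ)
    (hfin : {p : ℕ × ℕ | p ∉ Hset ρ σ}.Finite)
    (hU : {h : R | ρ h ≤ ρ 1} ∩ {h : R | σ h ≤ σ 1} = Set.range (algebraMap F R))
    (f : ℕ → R) (hf0 : f 0 = 1)
    (hf : ∀ i : ℕ, 1 ≤ i → ρ (f i) = (i : WithBot ℕ))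
    (hmin : ∀ i : ℕ, 1 ≤ i → ∀ h : R, ρ h = (i : WithBot ℕ) → σ (f i) ≤ σ h)
    (m : ℕ) (hgap : (0, m) ∉ Hset ρ σ) :
    ∃! i : ℕ, σ (f i) = (m : WithBot ℕ) := by
  classical
  obtain ⟨⟨hρ0, hρ1, hρ2, -, -, hρ5⟩, hρnorm, -, -, -⟩ := hρ
  obtain ⟨⟨hσ0, hσ1, hσ2, -, -, hσ5⟩, hσnorm, -, -, -⟩ := hσ
  -- R is nontrivial
  have hone : (1 : R) ≠ 0 := by
    intro h10
    have hall : ∀ g : R, g = 0 := fun g => by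
      calc g = g * 1 := (mul_one g).symm
        _ = 0 := by rw [h10, mul_zero]
    have hempty : {p : ℕ × ℕ | p ∉ Hset ρ σ} = Set.univ := by
      ext p
      simp only [Set.mem_setOf_eq, Set.mem_univ, iff_true]
      rintro ⟨g, hg, -⟩
      exact hg (hall g)
    rw [hempty] at hfin
    exact Set.infinite_univ hfin
  have hρone : ρ 1 = 0 := hρnorm 1 hone le_rfl
  have hσone : σ 1 = 0 := hσnorm 1 hone le_rfl
  -- m ≠ 0
  have hm0 : m ≠ 0 := by
    rintro rfl
    exact hgap ⟨1, hone, by simpa using hρone, by simpa using hσone⟩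
  -- coercion facts
  have hcast : ∀ n : ℕ, ((n : ℕ) : WithBot ℕ) = (n : WithBot ℕ) := fun n => rfl
  -- existence of some i with (i, m) ∈ Hset
  have hex : ∃ i : ℕ, (i, m) ∈ Hset ρ σ := by
    by_contra hno
    push_neg at hno
    have hsub : Set.range (fun i : ℕ => ((i, m) : ℕ × ℕ)) ⊆ {p | p ∉ Hset ρ σ} := by
      rintro p ⟨i, rfl⟩
      exact hno i
    exact Set.infinite_range_of_injective
      (fun a b hab => by simpa using hab) (hfin.subset hsub)
  set i₀ := Nat.find hex with hi₀def
  obtain ⟨g, hg0, hgρ, hgσ⟩ := Nat.find_spec hex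
  have hi₀pos : 1 ≤ i₀ := by
    rcases Nat.eq_zero_or_pos i₀ with h | h
    · exact absurd (h ▸ Nat.find_spec hex) hgap
    · exact h
  have hρfi : ρ (f i₀) = (i₀ : WithBot ℕ) := hf i₀ hi₀pos
  have hfi0 : f i₀ ≠ 0 := fun h => by
    rw [h, (hρ0 0).mpr rfl] at hρfi
    exact (WithBot.bot_ne_coe) hρfi
  -- σ (f i₀) is a natural number m' ≤ m
  have hσle : σ (f i₀) ≤ (m : WithBot ℕ) := hgσ ▸ hmin i₀ hi₀pos g hgρ
  obtain ⟨m', hm'⟩ : ∃ m' : ℕ, σ (f i₀) = (m' : WithBot ℕ) := by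
    rcases WithBot.ne_bot_iff_exists.mp (fun h => hfi0 ((hσ0 (f i₀)).mp h)) with ⟨m', hm'⟩
    exact ⟨m', hm'.symm⟩
  have hm'le : m' ≤ m := by
    rw [hm'] at hσle
    exact_mod_cast hσle
  -- positivity for applying (N4)
  have hρ1lt : ρ 1 < (i₀ : WithBot ℕ) := by
    rw [hρone]
    exact_mod_cast hi₀pos
  -- main existence claim: σ (f i₀) = m
  have hkey : σ (f i₀) = (m : WithBot ℕ) := by
    rcases eq_or_lt_of_le hm'le with rfl | hlt
    · exact hm'
    · exfalso
      obtain ⟨c, hc0, hcρ⟩ := hρ5 g (f i₀) (hgρ.trans hρfi.symm)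
        (hgρ ▸ hρ1lt) (hρfi ▸ hρ1lt)
      set h := g - c • f i₀ with hhdef
      -- σ h = m via dominance: h = (-c) • f i₀ + g
      have hrw : h = (-c) • f i₀ + g := by rw [neg_smul]; ring
      have hσneg : σ ((-c) • f i₀) = (m' : WithBot ℕ) :=
        (hσ1 (-c) (f i₀) (neg_ne_zero.mpr hc0)).trans hm'
      have hσh : σ h = (m : WithBot ℕ) := by
        rw [hrw, add_dominant_aux σ hσ1 hσ2]
        · exact hgσ
        · rw [hσneg, hgσ]
          exact_mod_cast hlt
      have hh0 : h ≠ 0 := fun h0 => by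
        rw [h0, (hσ0 0).mpr rfl] at hσh
        exact WithBot.bot_ne_coe hσh
      obtain ⟨j, hj⟩ : ∃ j : ℕ, ρ h = (j : WithBot ℕ) := by
        rcases WithBot.ne_bot_iff_exists.mp (fun hb => hh0 ((hρ0 h).mp hb)) with ⟨j, hj⟩
        exact ⟨j, hj.symm⟩
      have hjlt : j < i₀ := by
        rw [hj, hgρ] at hcρ
        exact_mod_cast hcρ
      exact Nat.find_min hex hjlt ⟨h, hh0, hj, hσh⟩
  -- uniqueness part
  refine ⟨i₀, hkey, ?_⟩
  -- first a general claim: for any two distinct indices both mapping to m, contradiction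
  have huniq : ∀ i j : ℕ, i < j → σ (f i) = (m : WithBot ℕ) → σ (f j) = (m : WithBot ℕ) → False := by
    intro i j hij hi hj
    have hjpos : 1 ≤ j := Nat.one_le_iff_ne_zero.mpr (by omega)
    have hipos : 1 ≤ i := by
      rcases Nat.eq_zero_or_pos i with rfl | h
      · rw [hf0, hσone] at hi
        exact absurd (by exact_mod_cast hi.symm) hm0
      · exact h
    have hσ1lti : σ 1 < σ (f i) := by
      rw [hσone, hi]
      exact_mod_cast Nat.pos_of_ne_zero hm0
    have hσ1ltj : σ 1 < σ (f j) := by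
      rw [hσone, hj]
      exact_mod_cast Nat.pos_of_ne_zero hm0
    obtain ⟨c, hc0, hcσ⟩ := hσ5 (f i) (f j) (hi.trans hj.symm) hσ1lti hσ1ltj
    set h := f i - c • f j with hhdef
    have hrw : h = f i + (-c) • f j := by rw [neg_smul]; ring
    have hρh : ρ h = (j : WithBot ℕ) := by
      rw [hrw, add_dominant_aux ρ hρ1 hρ2]
      · exact (hρ1 (-c) (f j) (neg_ne_zero.mpr hc0)).trans (hf j hjpos)
      · rw [hρ1 (-c) (f j) (neg_ne_zero.mpr hc0), hf i hipos, hf j hjpos]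
        exact_mod_cast hij
    have := hmin j hjpos h hρh
    rw [hj, hi] at *
    exact absurd (this.trans_lt hcσ) (lt_irrefl _)
  intro i hi
  by_contra hne
  rcases lt_or_gt_of_ne hne with h | h
  · exact huniq i i₀ h hi hkey
  · exact huniq i₀ i h hkey hi
end

section
/- Let ρ, σ be well agreeing near weights on an F-algebra R with good basis {f_i}. Then σ(f_i) = 0 if and only if i ∈ H(ρ) = {m : (m,0) ∈ H(ρ,σ)}. Consequently, i is a gap of H(ρ) if and only if σ(f_i) is a gap of H(σ), so H(ρ) and H(σ) have the same genus. -/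
lemma Hset_swap {R : Type*} [CommRing R] (ρ σ : R → WithBot ℕ) (p : ℕ × ℕ) :
    p ∈ Hset σ ρ ↔ (p.2, p.1) ∈ Hset ρ σ := by
  constructor
  · rintro ⟨w, hw, h1, h2⟩; exact ⟨w, hw, h2, h1⟩
  · rintro ⟨w, hw, h1, h2⟩; exact ⟨w, hw, h2, h1⟩

lemma aux_main {F R : Type*} [Field F] [CommRing R] [Algebra F R]
    (ρ σ : R → WithBot ℕ) (hρ : IsNearWeight F ρ) (hσ : IsNearWeight F σ)
    (hfin : {p : ℕ × ℕ | p ∉ Hset ρ σ}.Finite)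
    (f : ℕ → R) (hf0 : f 0 = 1)
    (hf : ∀ i : ℕ, 1 ≤ i → ρ (f i) = (i : WithBot ℕ))
    (hmin : ∀ i : ℕ, 1 ≤ i → ∀ h : R, ρ h = (i : WithBot ℕ) → σ (f i) ≤ σ h) :
    (∀ i : ℕ, σ (f i) = (0 : WithBot ℕ) ↔ (i, 0) ∈ Hset ρ σ) ∧
    (∀ i : ℕ, (i, 0) ∉ Hset ρ σ ↔
      ∃ t : ℕ, σ (f i) = (t : WithBot ℕ) ∧ (0, t) ∉ Hset ρ σ) ∧
    Set.InjOn (fun i => WithBot.unbotD 0 (σ (f i))) {i : ℕ | (i, 0) ∉ Hset ρ σ} := by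
  obtain ⟨⟨ρ0, ρN1, ρN2, -, -, -⟩, ρnorm, -, -, -⟩ := hρ
  obtain ⟨⟨σ0, -, -, -, -, σN5⟩, σnorm, -, -, -⟩ := hσ
  -- nontriviality
  have hcompl : (Hset ρ σ)ᶜ.Finite := hfin
  have hinf : (Hset ρ σ).Infinite := by
    have := hcompl.infinite_compl
    rwa [compl_compl] at this
  obtain ⟨p, w, hw, -, -⟩ := hinf.nonempty
  have : Nontrivial R := nontrivial_of_ne w 0 hw
  have ρ1 : ρ 1 = 0 := ρnorm 1 one_ne_zero le_rfl
  have σ1 : σ 1 = 0 := σnorm 1 one_ne_zero le_rfl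
  have ρfi : ∀ i : ℕ, ρ (f i) = (i : WithBot ℕ) := by
    intro i
    rcases Nat.eq_zero_or_pos i with h | h
    · subst h; rw [hf0, ρ1]; simp
    · exact hf i h
  have fi_ne : ∀ i : ℕ, f i ≠ 0 := by
    intro i hz
    have h1 := ρfi i
    rw [hz, (ρ0 0).mpr rfl] at h1
    exact absurd h1.symm (WithBot.coe_ne_bot)
  have σfi : ∀ i : ℕ, ∃ t : ℕ, σ (f i) = (t : WithBot ℕ) := by
    intro i
    have hb : σ (f i) ≠ ⊥ := fun h => fi_ne i ((σ0 (f i)).mp h)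
    obtain ⟨t, ht⟩ := WithBot.ne_bot_iff_exists.mp hb
    exact ⟨t, ht.symm⟩
  have mem00 : ((0 : ℕ), (0 : ℕ)) ∈ Hset ρ σ :=
    ⟨1, one_ne_zero, by simp [ρ1], by simp [σ1]⟩
  have K : ∀ i : ℕ, 1 ≤ i → ∀ g : R, ρ g < (i : WithBot ℕ) → σ g = σ (f i) →
      (0 : WithBot ℕ) < σ (f i) → False := by
    intro i hi g hρg hσg hpos
    obtain ⟨c, hc, hlt⟩ := σN5 (f i) g hσg.symm (by rw [σ1]; exact hpos)
      (by rw [σ1, hσg]; exact hpos)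
    have hcg : ρ (c • g) = ρ g := ρN1 c g hc
    have hneg : ρ (-(c • g)) = ρ g := by
      rw [← neg_smul]; exact ρN1 (-c) g (neg_ne_zero.mpr hc)
    have h1 : ρ (f i - c • g) ≤ (i : WithBot ℕ) := by
      have h2 := ρN2 (f i) (-(c • g))
      rw [← sub_eq_add_neg] at h2
      exact h2.trans (max_le (le_of_eq (ρfi i)) (by rw [hneg]; exact le_of_lt hρg))
    have h2 : (i : WithBot ℕ) ≤ ρ (f i - c • g) := by
      have h3 := ρN2 (f i - c • g) (c • g)
      rw [sub_add_cancel, ρfi i] at h3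
      rcases le_max_iff.mp h3 with h | h
      · exact h
      · rw [hcg] at h; exact absurd h (not_le.mpr hρg)
    exact absurd (hmin i hi _ (le_antisymm h1 h2)) (not_le.mpr hlt)
  have part1 : ∀ i : ℕ, σ (f i) = (0 : WithBot ℕ) ↔ (i, 0) ∈ Hset ρ σ := by
    intro i
    constructor
    · intro h; exact ⟨f i, fi_ne i, ρfi i, by simpa using h⟩
    · rintro ⟨h, hne, hρh, hσh⟩
      rcases Nat.eq_zero_or_pos i with hz | hpos
      · subst hz; rw [hf0, σ1]
      · have h1 := hmin i hpos h hρh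
        rw [hσh] at h1
        obtain ⟨t, ht⟩ := σfi i
        rw [ht] at h1 ⊢
        have ht0 : t = 0 := by exact_mod_cast le_antisymm (by exact_mod_cast h1) (Nat.zero_le t)
        simp [ht0]
  have tpos : ∀ k : ℕ, (k, 0) ∉ Hset ρ σ → ∀ t : ℕ, σ (f k) = (t : WithBot ℕ) → 0 < t := by
    intro k hk t htk
    rcases Nat.eq_zero_or_pos t with hz | h
    · subst hz; exact absurd ((part1 k).mp (by simpa using htk)) hk
    · exact h
  have part2 : ∀ i : ℕ, (i, 0) ∉ Hset ρ σ ↔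
      ∃ t : ℕ, σ (f i) = (t : WithBot ℕ) ∧ (0, t) ∉ Hset ρ σ := by
    intro i
    constructor
    · intro hgap
      obtain ⟨t, ht⟩ := σfi i
      refine ⟨t, ht, ?_⟩
      have hipos : 1 ≤ i := by
        rcases Nat.eq_zero_or_pos i with hz | h
        · subst hz; exact absurd mem00 hgap
        · exact h
      have htpos : 0 < t := tpos i hgap t ht
      rintro ⟨h, hne, hρh, hσh⟩
      refine K i hipos h ?_ ?_ ?_
      · rw [hρh]; exact_mod_cast hipos
      · rw [hσh, ht]
      · rw [ht]; exact_mod_cast htpos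
    · rintro ⟨t, ht, hgap⟩ hmem
      have h1 := (part1 i).mpr hmem
      rw [ht] at h1
      have ht0 : t = 0 := by exact_mod_cast h1
      subst ht0
      exact hgap mem00
  refine ⟨part1, part2, ?_⟩
  intro i hi j hj hij
  simp only [Set.mem_setOf_eq] at hi hj
  by_contra hne
  obtain ⟨ti, hti⟩ := σfi i
  obtain ⟨tj, htj⟩ := σfi j
  replace hij : WithBot.unbotD 0 (σ (f i)) = WithBot.unbotD 0 (σ (f j)) := hij
  rw [hti, htj] at hij
  rw [Nat.cast_withBot, Nat.cast_withBot, WithBot.unbotD_coe, WithBot.unbotD_coe] at hij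
  have hσeq : σ (f i) = σ (f j) := by rw [hti, htj, hij]
  rcases lt_or_gt_of_ne hne with h | h
  · refine K j (by omega) (f i) (by rw [ρfi]; exact_mod_cast h) hσeq ?_
    rw [htj]; exact_mod_cast tpos j hj tj htj
  · refine K i (by omega) (f j) (by rw [ρfi]; exact_mod_cast h) hσeq.symm ?_
    rw [hti]; exact_mod_cast tpos i hi ti hti

/-- `σ(f_i) = 0` iff `i ∈ H(ρ)`; `i` is a gap of `H(ρ)` iff
`σ(f_i)` is a gap of `H(σ)`; consequently `H(ρ)` and `H(σ)` have the same genus. -/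
theorem stmt_16 {F R : Type*} [Field F] [CommRing R] [Algebra F R]
    (ρ σ : R → WithBot ℕ) (hρ : IsNearWeight F ρ) (hσ : IsNearWeight F σ)
    (hfin : {p : ℕ × ℕ | p ∉ Hset ρ σ}.Finite)
    (hU : {h : R | ρ h ≤ ρ 1} ∩ {h : R | σ h ≤ σ 1} = Set.range (algebraMap F R))
    (f : ℕ → R) (hf0 : f 0 = 1)
    (hf : ∀ i : ℕ, 1 ≤ i → ρ (f i) = (i : WithBot ℕ))
    (hmin : ∀ i : ℕ, 1 ≤ i → ∀ h : R, ρ h = (i : WithBot ℕ) → σ (f i) ≤ σ h) :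
    (∀ i : ℕ, σ (f i) = (0 : WithBot ℕ) ↔ (i, 0) ∈ Hset ρ σ) ∧
    (∀ i : ℕ, (i, 0) ∉ Hset ρ σ ↔
      ∃ t : ℕ, σ (f i) = (t : WithBot ℕ) ∧ (0, t) ∉ Hset ρ σ) ∧
    {i : ℕ | (i, 0) ∉ Hset ρ σ}.ncard = {t : ℕ | (0, t) ∉ Hset ρ σ}.ncard := by
  obtain ⟨part1, part2, inj⟩ := aux_main ρ σ hρ hσ hfin f hf0 hf hmin
  refine ⟨part1, part2, ?_⟩
  -- finiteness of the gap sets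
  have finρ : {i : ℕ | (i, 0) ∉ Hset ρ σ}.Finite := by
    have he : {i : ℕ | (i, 0) ∉ Hset ρ σ}
        = (fun i : ℕ => ((i, 0) : ℕ × ℕ)) ⁻¹' {p : ℕ × ℕ | p ∉ Hset ρ σ} := rfl
    rw [he]
    exact hfin.preimage (Set.injOn_of_injective (fun a b h => (Prod.ext_iff.mp h).1))
  have finσ : {t : ℕ | (0, t) ∉ Hset ρ σ}.Finite := by
    have he : {t : ℕ | (0, t) ∉ Hset ρ σ}
        = (fun t : ℕ => ((0, t) : ℕ × ℕ)) ⁻¹' {p : ℕ × ℕ | p ∉ Hset ρ σ} := rfl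
    rw [he]
    exact hfin.preimage (Set.injOn_of_injective (fun a b h => (Prod.ext_iff.mp h).2))
  -- first inequality
  have hle1 : {i : ℕ | (i, 0) ∉ Hset ρ σ}.ncard ≤ {t : ℕ | (0, t) ∉ Hset ρ σ}.ncard := by
    refine Set.ncard_le_ncard_of_injOn (fun i => WithBot.unbotD 0 (σ (f i))) ?_ inj finσ
    intro i hi
    obtain ⟨t, ht, hgap⟩ := (part2 i).mp hi
    simp only [Set.mem_setOf_eq, ht, Nat.cast_withBot, WithBot.unbotD_coe]
    exact hgap
  -- swapped finiteness
  have hfin' : {p : ℕ × ℕ | p ∉ Hset σ ρ}.Finite := by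
    have he : {p : ℕ × ℕ | p ∉ Hset σ ρ}
        = Prod.swap ⁻¹' {p : ℕ × ℕ | p ∉ Hset ρ σ} := by
      ext q
      simp only [Set.mem_setOf_eq, Set.mem_preimage]
      rw [Hset_swap]
      rfl
    rw [he]
    exact hfin.preimage (Set.injOn_of_injective Prod.swap_injective)
  -- construct a good basis for σ
  have exg : ∀ i : ℕ, 1 ≤ i →
      ∃ h : R, σ h = (i : WithBot ℕ) ∧ ∀ h' : R, σ h' = (i : WithBot ℕ) → ρ h ≤ ρ h' := by
    intro i _
    obtain ⟨⟨ρ0, -, -, -, -, -⟩, -, -, -, -⟩ := hρ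
    obtain ⟨⟨σ0, -, -, -, -, -⟩, -, -, -, -⟩ := hσ
    have h1 : {m : ℕ | (m, i) ∉ Hset ρ σ}.Finite := by
      have he : {m : ℕ | (m, i) ∉ Hset ρ σ}
          = (fun m : ℕ => ((m, i) : ℕ × ℕ)) ⁻¹' {p : ℕ × ℕ | p ∉ Hset ρ σ} := rfl
      rw [he]
      exact hfin.preimage (Set.injOn_of_injective (fun a b h => (Prod.ext_iff.mp h).1))
    have h2 : {m : ℕ | (m, i) ∈ Hset ρ σ}.Nonempty := by
      have h3 := h1.infinite_compl
      have he : {m : ℕ | (m, i) ∉ Hset ρ σ}ᶜ = {m : ℕ | (m, i) ∈ Hset ρ σ} := by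
        ext m; simp
      rw [he] at h3
      exact h3.nonempty
    have hmem := Nat.sInf_mem h2
    obtain ⟨h, hne, hρh, hσh⟩ := hmem
    refine ⟨h, hσh, ?_⟩
    intro h' hσh'
    have hne' : h' ≠ 0 := by
      intro hz
      rw [hz, (σ0 0).mpr rfl] at hσh'
      exact WithBot.coe_ne_bot hσh'.symm
    have hb : ρ h' ≠ ⊥ := fun hb => hne' ((ρ0 h').mp hb)
    obtain ⟨m, hm⟩ := WithBot.ne_bot_iff_exists.mp hb
    have hmA : m ∈ {m : ℕ | (m, i) ∈ Hset ρ σ} := ⟨h', hne', by exact_mod_cast hm.symm, hσh'⟩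
    have := Nat.sInf_le hmA
    rw [hρh, ← hm]
    show ((sInf {m : ℕ | (m, i) ∈ Hset ρ σ} : ℕ) : WithBot ℕ) ≤ (m : WithBot ℕ)
    exact_mod_cast this
  choose g' hg1 hg2 using exg
  set g : ℕ → R := fun i => if h : 1 ≤ i then g' i h else 1 with hg
  have hg0 : g 0 = 1 := by simp [hg]
  have hgσ : ∀ i : ℕ, 1 ≤ i → σ (g i) = (i : WithBot ℕ) := by
    intro i hi; simp only [hg, dif_pos hi]; exact hg1 i hi
  have hgmin : ∀ i : ℕ, 1 ≤ i → ∀ h : R, σ h = (i : WithBot ℕ) → ρ (g i) ≤ ρ h := by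
    intro i hi h hh; simp only [hg, dif_pos hi]; exact hg2 i hi h hh
  obtain ⟨-, part2', inj'⟩ := aux_main σ ρ hσ hρ hfin' g hg0 hgσ hgmin
  -- identify the swapped gap sets
  have hA : {i : ℕ | (i, 0) ∉ Hset σ ρ} = {t : ℕ | (0, t) ∉ Hset ρ σ} := by
    ext t
    simp only [Set.mem_setOf_eq]
    rw [Hset_swap]
  have hB : {t : ℕ | (0, t) ∉ Hset σ ρ} = {i : ℕ | (i, 0) ∉ Hset ρ σ} := by
    ext t
    simp only [Set.mem_setOf_eq]
    rw [Hset_swap]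
  have hle2 : {i : ℕ | (i, 0) ∉ Hset σ ρ}.ncard ≤ {t : ℕ | (0, t) ∉ Hset σ ρ}.ncard := by
    refine Set.ncard_le_ncard_of_injOn (fun i => WithBot.unbotD 0 (ρ (g i))) ?_ inj' ?_
    · intro i hi
      obtain ⟨t, ht, hgap⟩ := (part2' i).mp hi
      simp only [Set.mem_setOf_eq, ht, Nat.cast_withBot, WithBot.unbotD_coe]
      exact hgap
    · rw [hB]; exact finρ
  rw [hA, hB] at hle2
  exact le_antisymm hle1 hle2
end

section
/- Let ρ, σ be well agreeing near weights on an F-algebra R with good basis {f_i}, and let Λ_σ be the largest gap of H(σ). Then σ(f_i) = 0 for all but finitely many i, and σ(f_i) ≤ Λ_σ for all i. -/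
/-- `σ(f_i) = 0` for all but finitely many `i`, and
`σ(f_i) ≤ Λ_σ` (the largest gap of `H(σ)`) for all `i`. -/
theorem stmt_17 {F R : Type*} [Field F] [CommRing R] [Algebra F R]
    (ρ σ : R → WithBot ℕ) (hρ : IsNearWeight F ρ) (hσ : IsNearWeight F σ)
    (hfin : {p : ℕ × ℕ | p ∉ Hset ρ σ}.Finite)
    (hU : {h : R | ρ h ≤ ρ 1} ∩ {h : R | σ h ≤ σ 1} = Set.range (algebraMap F R))
    (f : ℕ → R) (hf0 : f 0 = 1)
    (hf : ∀ i : ℕ, 1 ≤ i → ρ (f i) = (i : WithBot ℕ))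
    (hmin : ∀ i : ℕ, 1 ≤ i → ∀ h : R, ρ h = (i : WithBot ℕ) → σ (f i) ≤ σ h)
    (Λ : ℕ) (hΛgap : (0, Λ) ∉ Hset ρ σ)
    (hΛmax : ∀ t : ℕ, (0, t) ∉ Hset ρ σ → t ≤ Λ) :
    {i : ℕ | σ (f i) ≠ (0 : WithBot ℕ)}.Finite ∧
    ∀ i : ℕ, σ (f i) ≤ (Λ : WithBot ℕ) := by
  obtain ⟨hρN, hρnorm, -, -, -⟩ := hρ
  obtain ⟨hσN, hσnorm, -, -, -⟩ := hσ
  have hfne : ∀ i : ℕ, 1 ≤ i → f i ≠ 0 := by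
    intro i hi h
    have h2 := hf i hi
    rw [h, (hρN.1 0).mpr rfl] at h2
    exact absurd h2.symm (by simp)
  haveI : Nontrivial R := nontrivial_of_ne (f 1) 0 (hfne 1 le_rfl)
  have hρ1 : ρ 1 = 0 := hρnorm 1 one_ne_zero le_rfl
  have hσ1 : σ 1 = 0 := hσnorm 1 one_ne_zero le_rfl
  have hσne : ∀ i : ℕ, 1 ≤ i → σ (f i) ≠ ⊥ := by
    intro i hi h
    exact hfne i hi ((hσN.1 _).mp h)
  -- if (i,0) ∈ Hset with i ≥ 1 then σ (f i) = 0
  have key : ∀ i : ℕ, 1 ≤ i → (i, 0) ∈ Hset ρ σ → σ (f i) = 0 := by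
    rintro i hi ⟨g, hg, hgρ, hgσ⟩
    have hgσ' : σ g = ((0 : ℕ) : WithBot ℕ) := hgσ
    have h1 : σ (f i) ≤ ((0 : ℕ) : WithBot ℕ) := hgσ' ▸ hmin i hi g hgρ
    obtain ⟨m, hm⟩ : ∃ m : ℕ, σ (f i) = (m : WithBot ℕ) := by
      rcases WithBot.ne_bot_iff_exists.mp (hσne i hi) with ⟨m, hm⟩
      exact ⟨m, by rw [← hm, Nat.cast_withBot]⟩
    rw [hm] at h1 ⊢
    have hm0 : m ≤ 0 := by exact_mod_cast h1
    rw [Nat.le_zero.mp hm0, Nat.cast_zero]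
  constructor
  · have hsub : {i : ℕ | σ (f i) ≠ (0 : WithBot ℕ)} ⊆
        (fun i : ℕ => ((i, 0) : ℕ × ℕ)) ⁻¹' {p : ℕ × ℕ | p ∉ Hset ρ σ} := by
      intro i hi
      rcases Nat.eq_zero_or_pos i with rfl | hpos
      · exact absurd (by rw [hf0, hσ1]) hi
      · intro hmem
        exact hi (key i hpos hmem)
    exact (hfin.preimage (fun a _ b _ h => by simpa using (Prod.mk.injEq _ _ _ _ ▸ h).1)).subset hsub
  · intro i
    rcases Nat.eq_zero_or_pos i with rfl | hi
    · rw [hf0, hσ1]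
      calc (0 : WithBot ℕ) = ((0:ℕ) : WithBot ℕ) := Nat.cast_zero.symm
        _ ≤ (Λ : WithBot ℕ) := by exact_mod_cast Nat.zero_le Λ
    · by_contra hcon
      obtain ⟨m, hm⟩ : ∃ m : ℕ, σ (f i) = (m : WithBot ℕ) := by
        rcases WithBot.ne_bot_iff_exists.mp (hσne i hi) with ⟨m, hm⟩
        exact ⟨m, by rw [← hm, Nat.cast_withBot]⟩
      rw [hm] at hcon
      have hΛm : Λ < m := by exact_mod_cast not_le.mp hcon
      have hmem : ((0, m) : ℕ × ℕ) ∈ Hset ρ σ := by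
        by_contra h
        exact absurd (hΛmax m h) (not_le.mpr hΛm)
      obtain ⟨g, hg0, hgρ, hgσ⟩ := hmem
      have hgρ' : ρ g = ((0 : ℕ) : WithBot ℕ) := hgρ
      have hgσ' : σ g = ((m : ℕ) : WithBot ℕ) := hgσ
      have hm1 : 1 ≤ m := Nat.one_le_iff_ne_zero.mpr (by omega)
      have hσfg : σ (f i) = σ g := by rw [hm, hgσ']
      have hpos : σ 1 < σ (f i) := by
        rw [hσ1, hm]
        calc (0 : WithBot ℕ) = ((0:ℕ) : WithBot ℕ) := Nat.cast_zero.symm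
          _ < (m : WithBot ℕ) := by exact_mod_cast Nat.pos_of_ne_zero (by omega)
      obtain ⟨c, hc, hlt⟩ := hσN.2.2.2.2.2 (f i) g hσfg hpos (hσfg ▸ hpos)
      have hρcg : ρ (c • g) = ((0 : ℕ) : WithBot ℕ) := by
        rw [hρN.2.1 c g hc, hgρ']
      have hρfi := hf i hi
      have hρh : ρ (f i - c • g) = (i : WithBot ℕ) := by
        have hub : ρ (f i - c • g) ≤ (i : WithBot ℕ) := by
          have heq : f i - c • g = f i + (-c) • g := by rw [neg_smul, sub_eq_add_neg]
          rw [heq]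
          have h3 := hρN.2.2.1 (f i) ((-c) • g)
          rw [hρN.2.1 (-c) g (neg_ne_zero.mpr hc), hgρ', hρfi] at h3
          exact le_trans h3 (max_le le_rfl (by exact_mod_cast Nat.zero_le i))
        have hlb : (i : WithBot ℕ) ≤ ρ (f i - c • g) := by
          have hfi : f i = (f i - c • g) + c • g := by rw [sub_add_cancel]
          have h3 := hρN.2.2.1 (f i - c • g) (c • g)
          rw [← hfi, hρfi, hρcg] at h3
          rcases le_max_iff.mp h3 with h4 | h4
          · exact h4
          · have h5 : i ≤ 0 := by exact_mod_cast h4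
            omega
        exact le_antisymm hub hlb
      exact absurd (hmin i hi (f i - c • g) hρh) (not_le.mpr hlt)
end

section
/- Let S ⊆ ℕ² be a subsemigroup with finite complement (the semigroup H(ρ,σ) of a pair of well agreeing near weights), let γ be the number of gaps of H(ρ) = {m : (m,0) ∈ S}, and for i ∈ ℕ define τ(i) = min{t : (i,t) ∈ S}. Fix m ≥ Λ_σ (the largest gap of H(σ) = {t : (0,t) ∈ S}). For r ∈ ℕ define Σ(j) = max{τ(0),…,τ(j)} and N_r = {(i,j) ∈ ℕ² : i + j = r + 1 and τ(i) + Σ(j) ≤ m}. Then #N_r ≥ #(H(ρ) ∩ [1, r+1]); in particular, if r ≥ γ then #N_r ≥ r - γ + 1. -/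
/-- combinatorial n-order bound estimate. With
`N_r = {(i,j) : i + j = r + 1, τ(i) + Σ(j) ≤ m}` where `Σ(j) = max{τ(0),…,τ(j)}`,
one has `#N_r ≥ #(H(ρ) ∩ [1, r+1])`; in particular `#N_r ≥ r - γ + 1` for `r ≥ γ`. -/
theorem stmt_18
    (S : Set (ℕ × ℕ)) (hS0 : (0, 0) ∈ S)
    (hSadd : ∀ p q : ℕ × ℕ, p ∈ S → q ∈ S → p + q ∈ S)
    (hSfin : {p : ℕ × ℕ | p ∉ S}.Finite)
    (τ : ℕ → ℕ) (hτmem : ∀ i : ℕ, (i, τ i) ∈ S)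
    (hτmin : ∀ i t : ℕ, (i, t) ∈ S → τ i ≤ t)
    (γ : ℕ) (hγ : {i : ℕ | (i, 0) ∉ S}.ncard = γ)
    (Λ : ℕ) (hΛgap : (0, Λ) ∉ S) (hΛmax : ∀ t : ℕ, (0, t) ∉ S → t ≤ Λ)
    (hτ0 : ∀ i : ℕ, (i, 0) ∈ S → τ i = 0)
    (hτΛ : ∀ j : ℕ, τ j ≤ Λ)
    (m : ℕ) (hm : Λ ≤ m)
    (r : ℕ) :
    {i : ℕ | (i, 0) ∈ S ∧ 1 ≤ i ∧ i ≤ r + 1}.ncard ≤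
      {p : ℕ × ℕ | p.1 + p.2 = r + 1 ∧
        τ p.1 + (Finset.range (p.2 + 1)).sup τ ≤ m}.ncard ∧
    (γ ≤ r → r + 1 - γ ≤
      {p : ℕ × ℕ | p.1 + p.2 = r + 1 ∧
        τ p.1 + (Finset.range (p.2 + 1)).sup τ ≤ m}.ncard) := by
  set A : Set ℕ := {i : ℕ | (i, 0) ∈ S ∧ 1 ≤ i ∧ i ≤ r + 1} with hA
  set B : Set (ℕ × ℕ) := {p : ℕ × ℕ | p.1 + p.2 = r + 1 ∧
      τ p.1 + (Finset.range (p.2 + 1)).sup τ ≤ m} with hB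
  have hBfin : B.Finite := by
    apply Set.Finite.subset (Set.finite_Iic ((r+1, r+1) : ℕ × ℕ))
    rintro ⟨i, j⟩ ⟨h1, h2⟩
    simp only [Set.mem_Iic, Prod.mk_le_mk]
    omega
  have key : A.ncard ≤ B.ncard := by
    have himg : (fun i => (i, r + 1 - i)) '' A ⊆ B := by
      rintro ⟨x, y⟩ ⟨i, ⟨hiS, hi1, hi2⟩, heq⟩
      obtain ⟨rfl, rfl⟩ := Prod.mk.injEq .. ▸ heq
      constructor
      · omega
      · have h1 : τ i = 0 := hτ0 i hiS
        have h2 : (Finset.range (r + 1 - i + 1)).sup τ ≤ Λ :=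
          Finset.sup_le fun j _ => hτΛ j
        show τ i + (Finset.range (r + 1 - i + 1)).sup τ ≤ m
        omega
    calc A.ncard = ((fun i => (i, r + 1 - i)) '' A).ncard := by
          rw [Set.ncard_image_of_injective _ (fun a b h => by
            simpa using congrArg Prod.fst h)]
      _ ≤ B.ncard := Set.ncard_le_ncard himg hBfin
  refine ⟨key, fun hγr => ?_⟩
  have hG : {i : ℕ | (i, 0) ∉ S}.Finite := by
    apply Set.Finite.subset (hSfin.image Prod.fst)
    intro i hi
    exact ⟨(i, 0), hi, rfl⟩
  have hsub : Set.Icc 1 (r + 1) \ {i : ℕ | (i, 0) ∉ S} ⊆ A := by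
    rintro i ⟨hicc, hnot⟩
    simp only [Set.mem_Icc] at hicc
    exact ⟨not_not.mp hnot, hicc.1, hicc.2⟩
  have h1 : (Set.Icc 1 (r+1)).ncard - γ ≤ A.ncard := by
    calc (Set.Icc 1 (r+1)).ncard - γ
        = (Set.Icc 1 (r+1)).ncard - {i : ℕ | (i, 0) ∉ S}.ncard := by rw [hγ]
      _ ≤ (Set.Icc 1 (r+1) \ {i : ℕ | (i, 0) ∉ S}).ncard :=
          Set.le_ncard_diff _ _ hG
      _ ≤ A.ncard := Set.ncard_le_ncard hsub (Set.finite_Icc 1 (r+1) |>.subset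
          (fun i hi => Set.mem_Icc.mpr ⟨hi.2.1, hi.2.2⟩))
  have h2 : (Set.Icc 1 (r+1)).ncard = r + 1 := by
    rw [← Finset.coe_Icc, Set.ncard_coe_finset, Nat.card_Icc]; omega
  omega
end
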